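/- arXiv:1812.11712 — 10 statements merged into one kernel-verified Lean document; each statement's English description precedes it below -/
import Mathlib

section
/- For every positive integer n, every probability vector p = (p_0,…,p_{n-1}), every Boolean function f : {-1,1}^n → {-1,1}, and every i ∈ {1,…,n}, the i-th semivalue satisfies the reformulation: \tilde f^p(i) = (1/2)·Σ_{x ∈ {-1,1}^n} f(x)·x_i·(p_{wt(x)} + p_{wt(x)-1}) + (1/2)·Σ_{x ∈ {-1,1}^n} f(x)·(p_{wt(x)-1} − p_{wt(x)}). -/
open Finset

noncomputable section

/-- `sgn z` is `1` if `z ≥ 0` and `-1` otherwise. -/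
def sgn (z : ℝ) : ℝ := if 0 ≤ z then 1 else -1

/-- The ±1 real value encoded by a Boolean coordinate (`true ↦ 1`, `false ↦ -1`). -/
def chi (b : Bool) : ℝ := if b then 1 else -1

/-- `wt x` is the number of coordinates of `x ∈ {-1,1}^n` equal to `1`. -/
def wt {n : ℕ} (x : Fin n → Bool) : ℤ :=
  ((Finset.univ.filter fun i => x i = true).card : ℤ)

/-- Inner product `w · x` of a real vector `w` with a ±1 vector `x`. -/
def dotp {n : ℕ} (w : Fin n → ℝ) (x : Fin n → Bool) : ℝ :=
  ∑ i, w i * chi (x i)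

/-- The `i`-th semivalue of `f : {-1,1}^n → {-1,1}` with respect to the
probability vector `p` (indexed by `ℤ`, with `p t = 0` out of range):
`∑_{x : x_i = -1} p_{wt x} f(x) x_i + ∑_{x : x_i = 1} p_{wt x - 1} f(x) x_i`. -/
def semivalue {n : ℕ} (p : ℤ → ℝ) (f : (Fin n → Bool) → ℝ) (i : Fin n) : ℝ :=
  ∑ x : Fin n → Bool, (if x i then p (wt x - 1) else p (wt x)) * f x * chi (x i)

/-- `μ'_p(x) = p_{wt x} + p_{wt x - 1}`. -/
def mu' {n : ℕ} (p : ℤ → ℝ) (x : Fin n → Bool) : ℝ := p (wt x) + p (wt x - 1)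

/-- The normalizing factor `Λ(p) = ∑_x μ'_p(x)`. -/
def lam (n : ℕ) (p : ℤ → ℝ) : ℝ := ∑ x : Fin n → Bool, mu' p x

/-- The probability distribution `μ_p(x) = μ'_p(x)/Λ(p)`. -/
def mu {n : ℕ} (p : ℤ → ℝ) (x : Fin n → Bool) : ℝ := mu' p x / lam n p

theorem stmt0 (n : ℕ) (hn : 0 < n) (p : ℤ → ℝ)
    (hp_nonneg : ∀ t : ℤ, 0 ≤ p t)
    (hp_out : ∀ t : ℤ, (t < 0 ∨ (n : ℤ) ≤ t) → p t = 0)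
    (hp_sum : ∑ t ∈ Finset.range n, ((n - 1).choose t : ℝ) * p (t : ℤ) = 1)
    (f : (Fin n → Bool) → ℝ) (hf : ∀ x, f x = 1 ∨ f x = -1)
    (i : Fin n) :
    semivalue p f i
      = (1 / 2) * ∑ x : Fin n → Bool, f x * chi (x i) * (p (wt x) + p (wt x - 1))
        + (1 / 2) * ∑ x : Fin n → Bool, f x * (p (wt x - 1) - p (wt x)) := by
  unfold semivalue
  rw [Finset.mul_sum, Finset.mul_sum, ← Finset.sum_add_distrib]
  apply Finset.sum_congr rfl
  intro x _
  by_cases h : x i <;> simp [h, chi] <;> ring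
end
end

section
/- Let n ≥ 1, let c_1,…,c_n be positive integers with C = Σ_{i=1}^n c_i even, and let w = (c_1,…,c_n, −C/2, −C/2) ∈ ℚ^{n+2}. Then: (a) w·x = 0 for x = (1,…,1) and x = (−1,…,−1); (b) every x ∈ {-1,1}^{n+2} with w·x = 0 other than (1,…,1) and (−1,…,−1) satisfies x_{n+1} ≠ x_{n+2} and Σ_{i ≤ n : x_i = 1} c_i = C/2; and (c) the number of x ∈ {-1,1}^{n+2} \ {(1,…,1), (−1,…,−1)} with w·x = 0 equals 2·|{S ⊆ {1,…,n} : Σ_{i ∈ S} c_i = C/2}|. -/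
open Finset

noncomputable section

def jfun (n : ℕ) (s : Finset (Fin n) × Bool) (k : Fin (n + 2)) : Bool :=
  if h : (k : ℕ) < n then decide ((⟨(k : ℕ), h⟩ : Fin n) ∈ s.1)
  else if (k : ℕ) = n then s.2 else !s.2

theorem stmt2 (n : ℕ) (hn : 1 ≤ n) (c : Fin n → ℤ) (hc : ∀ i, 0 < c i)
    (m : ℤ) (hm : ∑ i, c i = 2 * m)
    (w : Fin (n + 2) → ℝ)
    (hw : ∀ i : Fin (n + 2), w i = if h : (i : ℕ) < n then (c ⟨i, h⟩ : ℝ) else -(m : ℝ)) :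
    (dotp w (fun _ => true) = 0 ∧ dotp w (fun _ => false) = 0) ∧
    (∀ x : Fin (n + 2) → Bool,
        dotp w x = 0 → x ≠ (fun _ => true) → x ≠ (fun _ => false) →
        x ⟨n, by omega⟩ ≠ x ⟨n + 1, by omega⟩ ∧
        ∑ i ∈ Finset.univ.filter (fun i : Fin n => x (Fin.castAdd 2 i) = true), c i = m) ∧
    {x : Fin (n + 2) → Bool |
        dotp w x = 0 ∧ x ≠ (fun _ => true) ∧ x ≠ (fun _ => false)}.ncard
      = 2 * {S : Finset (Fin n) | ∑ i ∈ S, c i = m}.ncard := by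
    classical
  have han : n < n + 2 := by omega
  have hbn : n + 1 < n + 2 := by omega
  set a : Fin (n + 2) := ⟨n, han⟩ with ha
  set b : Fin (n + 2) := ⟨n + 1, hbn⟩ with hb
  have hwc : ∀ i : Fin n, w (Fin.castAdd 2 i) = (c i : ℝ) := by
    intro i
    rw [hw]
    simp
  have hwa : w a = -(m : ℝ) := by rw [hw]; simp [ha]
  have hwb : w b = -(m : ℝ) := by rw [hw]; simp [hb]
  have hsumc : (∑ i, (c i : ℝ)) = 2 * (m : ℝ) := by exact_mod_cast hm
  have key : ∀ x : Fin (n + 2) → Bool,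
      dotp w x = 2 * (∑ i ∈ univ.filter (fun i : Fin n => x (Fin.castAdd 2 i) = true), (c i : ℝ))
        - 2 * (m : ℝ) - (m : ℝ) * (chi (x a) + chi (x b)) := by
    intro x
    unfold dotp
    rw [Fin.sum_univ_add, Fin.sum_univ_two]
    have h0 : (Fin.natAdd n (0 : Fin 2)) = a := by ext; simp [ha]
    have h1 : (Fin.natAdd n (1 : Fin 2)) = b := by ext; simp [hb]
    rw [h0, h1, hwa, hwb]
    have hterm : ∀ i : Fin n, w (Fin.castAdd 2 i) * chi (x (Fin.castAdd 2 i))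
        = 2 * (if x (Fin.castAdd 2 i) = true then (c i : ℝ) else 0) - (c i : ℝ) := by
      intro i
      rw [hwc]
      cases hxi : x (Fin.castAdd 2 i) <;> simp [chi, hxi] <;> ring
    rw [Finset.sum_congr rfl fun i _ => hterm i, Finset.sum_sub_distrib, ← Finset.mul_sum,
      ← Finset.sum_filter, hsumc]
    ring
  -- part (a)
  have part1 : dotp w (fun _ => true) = 0 ∧ dotp w (fun _ => false) = 0 := by
    constructor
    · rw [key, show (univ.filter fun i : Fin n => (fun _ : Fin (n+2) => true) (Fin.castAdd 2 i) = true) = univ from by simp, hsumc]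
      simp only [chi, if_pos]
      ring
    · rw [key]
      simp only [chi]
      norm_num
      ring
  have hcastk : ∀ (k : Fin (n+2)) (hk : (k : ℕ) < n), Fin.castAdd 2 (⟨(k : ℕ), hk⟩ : Fin n) = k := by
    intro k hk; ext; simp
  -- part (b)
  have part2 : ∀ x : Fin (n + 2) → Bool,
      dotp w x = 0 → x ≠ (fun _ => true) → x ≠ (fun _ => false) →
      x a ≠ x b ∧
      ∑ i ∈ Finset.univ.filter (fun i : Fin n => x (Fin.castAdd 2 i) = true), c i = m := by
    intro x hx hxt hxf
    have hkx := (key x).symm.trans hx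
    have hScast : (↑(∑ i ∈ univ.filter (fun i : Fin n => x (Fin.castAdd 2 i) = true), c i) : ℝ)
        = ∑ i ∈ univ.filter (fun i : Fin n => x (Fin.castAdd 2 i) = true), (c i : ℝ) := by
      push_cast
      rfl
    set S : ℤ := ∑ i ∈ univ.filter (fun i : Fin n => x (Fin.castAdd 2 i) = true), c i with hS
    have hsplit : S + ∑ i ∈ univ.filter (fun i : Fin n => ¬ x (Fin.castAdd 2 i) = true), c i
        = 2 * m := by
      rw [hS, Finset.sum_filter_add_sum_filter_not, hm]
    cases hA : x a <;> cases hB : x b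
    · -- both false : S = 0, contradiction with x ≠ all-false
      rw [hA, hB] at hkx
      simp only [chi] at hkx
      norm_num at hkx
      have hS0 : S = 0 := by
        have : (S : ℝ) = 0 := by rw [hScast]; linarith
        exact_mod_cast this
      have hempty : (univ.filter (fun i : Fin n => x (Fin.castAdd 2 i) = true)) = ∅ := by
        by_contra h
        have := Finset.sum_pos (fun i _ => hc i) (Finset.nonempty_of_ne_empty h)
        omega
      exfalso
      apply hxf
      funext k
      by_cases hk : (k : ℕ) < n
      · have : (⟨(k : ℕ), hk⟩ : Fin n) ∉ univ.filter (fun i : Fin n => x (Fin.castAdd 2 i) = true) := by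
          rw [hempty]; exact Finset.notMem_empty _
        simp only [Finset.mem_filter, Finset.mem_univ, true_and] at this
        rw [hcastk k hk] at this
        simpa using this
      · have hk2 : (k : ℕ) = n ∨ (k : ℕ) = n + 1 := by omega
        rcases hk2 with h | h
        · have : k = a := by ext; simp [ha, h]
          rw [this, hA]
        · have : k = b := by ext; simp [hb, h]
          rw [this, hB]
    · -- a false, b true
      refine ⟨by simp [hA, hB], ?_⟩
      rw [hA, hB] at hkx
      simp only [chi] at hkx
      norm_num at hkx
      have : (S : ℝ) = m := by rw [hScast]; linarith
      exact_mod_cast this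
    · -- a true, b false
      refine ⟨by simp [hA, hB], ?_⟩
      rw [hA, hB] at hkx
      simp only [chi] at hkx
      norm_num at hkx
      have : (S : ℝ) = m := by rw [hScast]; linarith
      exact_mod_cast this
    · -- both true : S = 2m, contradiction with x ≠ all-true
      rw [hA, hB] at hkx
      simp only [chi] at hkx
      norm_num at hkx
      have hS0 : S = 2 * m := by
        have : (S : ℝ) = 2 * m := by rw [hScast]; linarith
        exact_mod_cast this
      have hzero : ∑ i ∈ univ.filter (fun i : Fin n => ¬ x (Fin.castAdd 2 i) = true), c i = 0 := by
        omega
      have hempty : (univ.filter (fun i : Fin n => ¬ x (Fin.castAdd 2 i) = true)) = ∅ := by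
        by_contra h
        have := Finset.sum_pos (fun i _ => hc i) (Finset.nonempty_of_ne_empty h)
        omega
      exfalso
      apply hxt
      funext k
      by_cases hk : (k : ℕ) < n
      · have : (⟨(k : ℕ), hk⟩ : Fin n) ∉ univ.filter (fun i : Fin n => ¬ x (Fin.castAdd 2 i) = true) := by
          rw [hempty]; exact Finset.notMem_empty _
        simp only [Finset.mem_filter, Finset.mem_univ, true_and, not_not] at this
        rw [hcastk k hk] at this
        simpa using this
      · have hk2 : (k : ℕ) = n ∨ (k : ℕ) = n + 1 := by omega
        rcases hk2 with h | h
        · have : k = a := by ext; simp [ha, h]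
          rw [this, hA]
        · have : k = b := by ext; simp [hb, h]
          rw [this, hB]
  -- part (c)
  refine ⟨part1, fun x hx hxt hxf => part2 x hx hxt hxf, ?_⟩
  set A : Finset (Fin (n + 2) → Bool) :=
    univ.filter (fun x => dotp w x = 0 ∧ x ≠ (fun _ => true) ∧ x ≠ (fun _ => false)) with hA
  set B : Finset (Finset (Fin n)) := univ.filter (fun S => ∑ i ∈ S, c i = m) with hB
  have hL : {x : Fin (n + 2) → Bool |
      dotp w x = 0 ∧ x ≠ (fun _ => true) ∧ x ≠ (fun _ => false)}.ncard = A.card := by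
    rw [← Set.ncard_coe_finset]
    congr 1
    ext x
    simp [hA]
  have hR : {S : Finset (Fin n) | ∑ i ∈ S, c i = m}.ncard = B.card := by
    rw [← Set.ncard_coe_finset]
    congr 1
    ext S
    simp [hB]
  rw [hL, hR]
  have hja : ∀ s : Finset (Fin n) × Bool, jfun n s a = s.2 := by
    intro s; simp [jfun, ha]
  have hjb : ∀ s : Finset (Fin n) × Bool, jfun n s b = !s.2 := by
    intro s; simp [jfun, hb]
  have hjc : ∀ (s : Finset (Fin n) × Bool) (i : Fin n),
      jfun n s (Fin.castAdd 2 i) = decide (i ∈ s.1) := by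
    intro s i; simp [jfun]
  have hjfil : ∀ s : Finset (Fin n) × Bool,
      univ.filter (fun i : Fin n => jfun n s (Fin.castAdd 2 i) = true) = s.1 := by
    intro s
    ext i
    simp [hjc]
  have hcard : A.card = (B ×ˢ (univ : Finset Bool)).card := by
    apply Finset.card_bij'
      (i := fun x _ => ((univ.filter fun i : Fin n => x (Fin.castAdd 2 i) = true), x a))
      (j := fun s _ => jfun n s)
    · -- hi
      intro x hxA
      rw [hA, Finset.mem_filter] at hxA
      obtain ⟨-, hx, hxt, hxf⟩ := hxA
      have := (part2 x hx hxt hxf).2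
      simp [Finset.mem_product, hB, this]
    · -- hj
      intro s hs
      rw [Finset.mem_product, hB, Finset.mem_filter] at hs
      obtain ⟨⟨-, hs1⟩, -⟩ := hs
      rw [hA, Finset.mem_filter]
      refine ⟨Finset.mem_univ _, ?_, ?_, ?_⟩
      · rw [key, hjfil, hja, hjb]
        have : (∑ i ∈ s.1, (c i : ℝ)) = (m : ℝ) := by exact_mod_cast hs1
        rw [this]
        cases s.2 <;> simp [chi] <;> ring
      · intro h
        cases hs2 : s.2
        · have := congrFun h a
          rw [hja, hs2] at this
          simp at this
        · have := congrFun h b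
          rw [hjb, hs2] at this
          simp at this
      · intro h
        cases hs2 : s.2
        · have := congrFun h b
          rw [hjb, hs2] at this
          simp at this
        · have := congrFun h a
          rw [hja, hs2] at this
          simp at this
    · -- left_inv
      intro x hxA
      rw [hA, Finset.mem_filter] at hxA
      obtain ⟨-, hx, hxt, hxf⟩ := hxA
      have hne := (part2 x hx hxt hxf).1
      funext k
      by_cases hk : (k : ℕ) < n
      · rw [← hcastk k hk, hjc]
        simp
      · have hk2 : (k : ℕ) = n ∨ (k : ℕ) = n + 1 := by omega
        rcases hk2 with h | h
        · have hka : k = a := by ext; simp [ha, h]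
          rw [hka, hja]
        · have hkb : k = b := by ext; simp [hb, h]
          rw [hkb, hjb]
          cases hxa : x a <;> cases hxb : x b <;> simp [hxa, hxb] at hne ⊢
    · -- right_inv
      intro s hs
      ext1
      · exact hjfil s
      · exact hja s
  rw [hcard, Finset.card_product]
  simp [mul_comm]
end
end

section
/- Let n ≥ 1, let c_1,…,c_n be positive integers with C = Σ_{i=1}^n c_i even, and suppose k ∈ {1,…,n−1} is such that every subset S ⊆ {1,…,n} with Σ_{i ∈ S} c_i = C/2 has |S| = k or |S| = n−k. Let w = (c_1,…,c_n, −C/2, −C/2), let p = (p_0,…,p_{n+1}) be a probability vector on {-1,1}^{n+2}, and let N = |{S ⊆ {1,…,n} : Σ_{i ∈ S} c_i = C/2}|. Then Pr_{x ∼ μ_p}[w·x = 0] = ( N·(p_k + p_{k+1} + p_{n−k} + p_{n−k+1}) + p_0 + p_{n+1} ) / Λ(p). Equivalently, N = ( Λ(p)·Pr_{x ∼ μ_p}[w·x = 0] − (p_0 + p_{n+1}) ) / (p_k + p_{k+1} + p_{n−k} + p_{n−k+1}), provided p_k + p_{k+1} + p_{n−k} + p_{n−k+1} > 0. -/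
open Finset

noncomputable section

open scoped Classical

lemma wt_snoc {n : ℕ} (y : Fin n → Bool) (b : Bool) :
    wt (Fin.snoc y b) = wt y + (if b then 1 else 0) := by
  unfold wt
  rw [Finset.card_filter, Finset.card_filter]
  push_cast
  rw [Fin.sum_univ_castSucc]
  simp [Fin.snoc_castSucc, Fin.snoc_last]

lemma wt_of_set {n : ℕ} (S : Finset (Fin n)) :
    wt (fun i => decide (i ∈ S)) = (S.card : ℤ) := by
  unfold wt
  norm_num

lemma bij_set {n : ℕ} :
    Function.Bijective (fun (S : Finset (Fin n)) => fun i => decide (i ∈ S)) := by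
  constructor
  · intro S T h
    ext i
    have := congrFun h i
    simpa using this
  · intro y
    refine ⟨Finset.univ.filter fun i => y i = true, ?_⟩
    funext i
    cases h : y i <;> simp [h]

lemma dotp_snoc {n : ℕ} (w : Fin (n+1) → ℝ) (y : Fin n → Bool) (b : Bool) :
    dotp w (Fin.snoc y b) = dotp (fun i => w i.castSucc) y + w (Fin.last n) * chi b := by
  unfold dotp
  rw [Fin.sum_univ_castSucc]
  simp [Fin.snoc_castSucc, Fin.snoc_last]

lemma sum_chi_eq {n : ℕ} (c : Fin n → ℤ) (m : ℤ) (hm : ∑ i, c i = 2 * m)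
    (y : Fin n → Bool) :
    ∑ i, (c i : ℝ) * chi (y i)
      = 2 * ((∑ i ∈ Finset.univ.filter fun i => y i = true, c i : ℤ) : ℝ) - 2 * (m : ℝ) := by
  rw [← Finset.sum_filter_add_sum_filter_not univ (fun i => y i = true)]
  have h1 : ∀ i ∈ Finset.univ.filter fun i => y i = true, (c i : ℝ) * chi (y i) = (c i : ℝ) := by
    intro i hi; simp only [mem_filter] at hi; simp [chi, hi.2]
  have h2 : ∀ i ∈ Finset.univ.filter fun i => ¬ (y i = true),
      (c i : ℝ) * chi (y i) = -(c i : ℝ) := by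
    intro i hi; simp only [mem_filter] at hi; simp [chi, hi.2]
  rw [Finset.sum_congr rfl h1, Finset.sum_congr rfl h2, Finset.sum_neg_distrib]
  have htot : ((∑ i ∈ Finset.univ.filter fun i => y i = true, c i : ℤ) : ℝ)
      + ((∑ i ∈ Finset.univ.filter fun i => ¬ (y i = true), c i : ℤ) : ℝ) = 2 * (m : ℝ) := by
    push_cast [← Finset.sum_filter_add_sum_filter_not univ (fun i => y i = true) c] at hm ⊢
    exact_mod_cast hm
  push_cast at htot ⊢
  linarith

lemma sum_decomp {n : ℕ} (F : (Fin (n+2) → Bool) → ℝ) :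
    ∑ x : Fin (n+2) → Bool, F x
      = ∑ y : Fin n → Bool,
          (F (Fin.snoc (Fin.snoc y false) false) + F (Fin.snoc (Fin.snoc y true) false)
            + F (Fin.snoc (Fin.snoc y false) true) + F (Fin.snoc (Fin.snoc y true) true)) := by
  have he : ∀ (m : ℕ) (b : Bool) (y : Fin m → Bool),
      (Fin.snocEquiv (fun _ => Bool)) (b, y) = Fin.snoc y b := fun _ _ _ => rfl
  rw [← Equiv.sum_comp (Fin.snocEquiv (fun _ => Bool)) F, Fintype.sum_prod_type,
    Fintype.sum_bool]
  simp only [he]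
  rw [← Equiv.sum_comp (Fin.snocEquiv (fun _ => Bool))
        (fun x : Fin (n+1) → Bool => F (Fin.snoc x true)),
      ← Equiv.sum_comp (Fin.snocEquiv (fun _ => Bool))
        (fun x : Fin (n+1) → Bool => F (Fin.snoc x false)),
      Fintype.sum_prod_type, Fintype.sum_prod_type, Fintype.sum_bool, Fintype.sum_bool,
      ← Finset.sum_add_distrib, ← Finset.sum_add_distrib, ← Finset.sum_add_distrib]
  apply Finset.sum_congr rfl
  intro y _
  simp only [he]
  ring

theorem stmt3 (n : ℕ) (hn : 1 ≤ n) (c : Fin n → ℤ) (hc : ∀ i, 0 < c i)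
    (m : ℤ) (hm : ∑ i, c i = 2 * m)
    (k : ℕ) (hk1 : 1 ≤ k) (hk2 : k + 1 ≤ n)
    (hsize : ∀ S : Finset (Fin n), ∑ i ∈ S, c i = m → S.card = k ∨ S.card = n - k)
    (w : Fin (n + 2) → ℝ)
    (hw : ∀ i : Fin (n + 2), w i = if h : (i : ℕ) < n then (c ⟨i, h⟩ : ℝ) else -(m : ℝ))
    (p : ℤ → ℝ)
    (hp_nonneg : ∀ t : ℤ, 0 ≤ p t)
    (hp_out : ∀ t : ℤ, (t < 0 ∨ (n : ℤ) + 2 ≤ t) → p t = 0)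
    (hp_sum : ∑ t ∈ Finset.range (n + 2), ((n + 1).choose t : ℝ) * p (t : ℤ) = 1)
    (N : ℕ) (hN : N = {S : Finset (Fin n) | ∑ i ∈ S, c i = m}.ncard) :
    (∑ x : Fin (n + 2) → Bool, if dotp w x = 0 then mu p x else 0)
        = ((N : ℝ) * (p (k : ℤ) + p ((k : ℤ) + 1) + p ((n : ℤ) - (k : ℤ)) + p ((n : ℤ) - (k : ℤ) + 1))
            + p 0 + p ((n : ℤ) + 1)) / lam (n + 2) p ∧
    (0 < p (k : ℤ) + p ((k : ℤ) + 1) + p ((n : ℤ) - (k : ℤ)) + p ((n : ℤ) - (k : ℤ) + 1) →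
      (N : ℝ)
        = (lam (n + 2) p * (∑ x : Fin (n + 2) → Bool, if dotp w x = 0 then mu p x else 0)
              - (p 0 + p ((n : ℤ) + 1)))
          / (p (k : ℤ) + p ((k : ℤ) + 1) + p ((n : ℤ) - (k : ℤ)) + p ((n : ℤ) - (k : ℤ) + 1))) := by
  -- notation
  set T : ℝ := (N : ℝ) * (p (k : ℤ) + p ((k : ℤ) + 1) + p ((n : ℤ) - (k : ℤ))
      + p ((n : ℤ) - (k : ℤ) + 1)) + p 0 + p ((n : ℤ) + 1) with hT
  -- the subset-sum function
  set s : (Fin n → Bool) → ℤ :=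
    fun y => ∑ i ∈ Finset.univ.filter fun i => y i = true, c i with hs
  -- dot product formula
  have hdotp : ∀ (y : Fin n → Bool) (a b : Bool),
      dotp w (Fin.snoc (Fin.snoc y a) b)
        = 2 * ((s y : ℤ) : ℝ) - 2 * (m : ℝ) - (m : ℝ) * chi a - (m : ℝ) * chi b := by
    intro y a b
    rw [dotp_snoc, dotp_snoc]
    have h1 : (fun i : Fin n => w i.castSucc.castSucc) = fun i : Fin n => (c i : ℝ) := by
      funext i
      rw [hw]
      have hi : ((i.castSucc.castSucc : Fin (n+2)) : ℕ) = (i : ℕ) := rfl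
      rw [dif_pos (by rw [hi]; exact i.isLt)]
      congr 1
    have h2 : w (Fin.last n).castSucc = -(m : ℝ) := by
      rw [hw]
      rw [dif_neg (by simp)]
    have h3 : w (Fin.last (n+1)) = -(m : ℝ) := by
      rw [hw]
      rw [dif_neg (by simp)]
    have h4 : dotp (fun i : Fin n => w i.castSucc.castSucc) y
        = 2 * ((s y : ℤ) : ℝ) - 2 * (m : ℝ) := by
      unfold dotp
      rw [show (fun i : Fin n => w i.castSucc.castSucc * chi (y i))
            = fun i : Fin n => (c i : ℝ) * chi (y i) by funext i; rw [congrFun h1 i]]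
      exact sum_chi_eq c m hm y
    rw [h4, h2, h3]
    ring
  -- m is positive
  have hmpos : 0 < m := by
    have hne : Nonempty (Fin n) := Fin.pos_iff_nonempty.mp (by omega)
    have : 0 < ∑ i, c i := Finset.sum_pos (fun i _ => hc i) Finset.univ_nonempty
    omega
  have chiT : chi true = 1 := by simp [chi]
  have chiF : chi false = -1 := by simp [chi]
  -- characterization of s y = 0
  have hs0 : ∀ y : Fin n → Bool, s y = 0 ↔ y = fun _ => false := by
    intro y
    constructor
    · intro h
      have hfe : (Finset.univ.filter fun i => y i = true) = ∅ := by
        by_contra hne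
        have : 0 < s y := Finset.sum_pos (fun i _ => hc i)
          (Finset.nonempty_iff_ne_empty.mpr hne)
        omega
      funext i
      by_contra hyi
      simp only [Bool.not_eq_false] at hyi
      have hmem : i ∈ Finset.univ.filter fun i => y i = true := by simp [hyi]
      rw [hfe] at hmem
      exact absurd hmem (Finset.notMem_empty i)
    · intro h; subst h; simp [hs]
  -- characterization of s y = 2m
  have hs2m : ∀ y : Fin n → Bool, s y = 2 * m ↔ y = fun _ => true := by
    intro y
    constructor
    · intro h
      have hadd := Finset.sum_add_sum_compl (Finset.univ.filter fun i => y i = true) c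
      rw [hm] at hadd
      have hsy : s y = ∑ i ∈ Finset.univ.filter fun i => y i = true, c i := rfl
      have hcompl : ∑ i ∈ (Finset.univ.filter fun i => y i = true)ᶜ, c i = 0 := by omega
      have hce : (Finset.univ.filter fun i => y i = true)ᶜ = ∅ := by
        by_contra hne
        have : 0 < ∑ i ∈ (Finset.univ.filter fun i => y i = true)ᶜ, c i :=
          Finset.sum_pos (fun i _ => hc i) (Finset.nonempty_iff_ne_empty.mpr hne)
        omega
      funext i
      by_contra hyi
      simp only [Bool.not_eq_true] at hyi
      have hmem : i ∈ (Finset.univ.filter fun i => y i = true)ᶜ := by simp [hyi]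
      rw [hce] at hmem
      exact absurd hmem (Finset.notMem_empty i)
    · intro h; subst h
      simp only [hs]
      rw [← hm]
      apply Finset.sum_congr _ (fun _ _ => rfl)
      ext i
      simp
  -- weights of constant vectors
  have hwt_false : wt (fun _ : Fin n => false) = 0 := by simp [wt]
  have hwt_true : wt (fun _ : Fin n => true) = (n : ℤ) := by simp [wt]
  -- the unnormalized sum
  have key : (∑ x : Fin (n + 2) → Bool, if dotp w x = 0 then mu' p x else 0) = T := by
    rw [sum_decomp (fun x : Fin (n+2) → Bool => if dotp w x = 0 then mu' p x else 0)]
    have hterm : ∀ y : Fin n → Bool,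
        ((if dotp w (Fin.snoc (Fin.snoc y false) false) = 0
            then mu' p (Fin.snoc (Fin.snoc y false) false) else 0)
          + (if dotp w (Fin.snoc (Fin.snoc y true) false) = 0
            then mu' p (Fin.snoc (Fin.snoc y true) false) else 0)
          + (if dotp w (Fin.snoc (Fin.snoc y false) true) = 0
            then mu' p (Fin.snoc (Fin.snoc y false) true) else 0)
          + (if dotp w (Fin.snoc (Fin.snoc y true) true) = 0
            then mu' p (Fin.snoc (Fin.snoc y true) true) else 0))
        = ((if s y = 0 then p (wt y) + p (wt y - 1) else 0)
          + (if s y = m then p (wt y + 1) + p (wt y) else 0)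
          + (if s y = m then p (wt y + 1) + p (wt y) else 0)
          + (if s y = 2 * m then p (wt y + 2) + p (wt y + 1) else 0)) := by
      intro y
      have hv : ∀ a b : Bool, mu' p (Fin.snoc (Fin.snoc y a) b)
          = p (wt y + (if a then 1 else 0) + (if b then 1 else 0))
            + p (wt y + (if a then 1 else 0) + (if b then 1 else 0) - 1) := by
        intro a b
        unfold mu'
        rw [wt_snoc, wt_snoc]
      congr 1
      congr 1
      congr 1
      · apply if_congr _ _ rfl
        · rw [hdotp]
          constructor
          · intro h
            rw [chiF] at h
            have : ((s y : ℤ) : ℝ) = ((0 : ℤ) : ℝ) := by push_cast at h ⊢; linarith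
            exact_mod_cast this
          · intro h
            rw [h, chiF]
            push_cast
            ring
        · rw [hv]; norm_num
      · apply if_congr _ _ rfl
        · rw [hdotp]
          constructor
          · intro h
            rw [chiT, chiF] at h
            have : ((s y : ℤ) : ℝ) = ((m : ℤ) : ℝ) := by push_cast at h ⊢; linarith
            exact_mod_cast this
          · intro h
            rw [h, chiT, chiF]
            push_cast
            ring
        · rw [hv]; norm_num
      · apply if_congr _ _ rfl
        · rw [hdotp]
          constructor
          · intro h
            rw [chiF, chiT] at h
            have : ((s y : ℤ) : ℝ) = ((m : ℤ) : ℝ) := by push_cast at h ⊢; linarith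
            exact_mod_cast this
          · intro h
            rw [h, chiF, chiT]
            push_cast
            ring
        · rw [hv]; norm_num
      · apply if_congr _ _ rfl
        · rw [hdotp]
          constructor
          · intro h
            rw [chiT] at h
            have : ((s y : ℤ) : ℝ) = ((2 * m : ℤ) : ℝ) := by push_cast at h ⊢; linarith
            exact_mod_cast this
          · intro h
            rw [h, chiT]
            push_cast
            ring
        · rw [hv]
          norm_num
          rw [show wt y + 1 + 1 = wt y + 2 from by ring]
    rw [Finset.sum_congr rfl (fun y _ => hterm y)]
    rw [Finset.sum_add_distrib, Finset.sum_add_distrib, Finset.sum_add_distrib]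
    -- sum 1 : y = const false
    have hsum1 : (∑ y : Fin n → Bool, if s y = 0 then p (wt y) + p (wt y - 1) else 0)
        = p 0 := by
      have hcg : ∀ y : Fin n → Bool, (if s y = 0 then p (wt y) + p (wt y - 1) else 0)
          = (if y = (fun _ => false) then p 0 else 0) := by
        intro y
        by_cases h : y = fun _ => false
        · rw [if_pos ((hs0 y).mpr h), if_pos h, h, hwt_false]
          rw [hp_out (0 - 1) (Or.inl (by norm_num))]
          norm_num
        · rw [if_neg (fun hh => h ((hs0 y).mp hh)), if_neg h]
      rw [Finset.sum_congr rfl (fun y _ => hcg y)]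
      simp
    -- sum 4 : y = const true
    have hsum4 : (∑ y : Fin n → Bool, if s y = 2 * m then p (wt y + 2) + p (wt y + 1) else 0)
        = p ((n : ℤ) + 1) := by
      have hcg : ∀ y : Fin n → Bool, (if s y = 2 * m then p (wt y + 2) + p (wt y + 1) else 0)
          = (if y = (fun _ => true) then p ((n : ℤ) + 1) else 0) := by
        intro y
        by_cases h : y = fun _ => true
        · rw [if_pos ((hs2m y).mpr h), if_pos h, h, hwt_true]
          rw [hp_out ((n : ℤ) + 2) (Or.inr (by norm_num))]
          norm_num
        · rw [if_neg (fun hh => h ((hs2m y).mp hh)), if_neg h]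
      rw [Finset.sum_congr rfl (fun y _ => hcg y)]
      simp
    -- sum 2/3 : subsets with sum m
    have hsum2 : (∑ y : Fin n → Bool, if s y = m then p (wt y + 1) + p (wt y) else 0)
        + (∑ y : Fin n → Bool, if s y = m then p (wt y + 1) + p (wt y) else 0)
        = (N : ℝ) * (p (k : ℤ) + p ((k : ℤ) + 1) + p ((n : ℤ) - (k : ℤ))
            + p ((n : ℤ) - (k : ℤ) + 1)) := by
      have hbij := Fintype.sum_bijective _ (bij_set (n := n))
        (fun S : Finset (Fin n) =>
          if s (fun i => decide (i ∈ S)) = m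
            then p (wt (fun i => decide (i ∈ S)) + 1) + p (wt (fun i => decide (i ∈ S))) else 0)
        (fun y => if s y = m then p (wt y + 1) + p (wt y) else 0)
        (fun S => rfl)
      rw [← hbij]
      have hSs : ∀ S : Finset (Fin n), s (fun i => decide (i ∈ S)) = ∑ i ∈ S, c i := by
        intro S
        simp only [hs]
        apply Finset.sum_congr _ (fun _ _ => rfl)
        ext i
        simp
      have heach : ∀ S : Finset (Fin n),
          (if s (fun i => decide (i ∈ S)) = m
            then p (wt (fun i => decide (i ∈ S)) + 1) + p (wt (fun i => decide (i ∈ S))) else 0)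
          = (if ∑ i ∈ S, c i = m then p ((S.card : ℤ) + 1) + p ((S.card : ℤ)) else 0) := by
        intro S
        rw [hSs, wt_of_set]
      rw [Finset.sum_congr rfl (fun S _ => heach S)]
      rw [← Finset.sum_filter]
      set A : Finset (Finset (Fin n)) :=
        Finset.univ.filter (fun S => ∑ i ∈ S, c i = m) with hA
      have hNA : (N : ℝ) = (A.card : ℝ) := by
        rw [hN, Set.ncard_eq_toFinset_card', Set.toFinset_setOf]
      have hmemA : ∀ S : Finset (Fin n), S ∈ A ↔ ∑ i ∈ S, c i = m := by
        intro S; simp [hA]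
      have hcomplA : ∀ S ∈ A, Sᶜ ∈ A := by
        intro S hS
        rw [hmemA] at hS ⊢
        have := Finset.sum_add_sum_compl S c
        omega
      have hcardA : ∀ S ∈ A, ((Sᶜ).card : ℤ) = (n : ℤ) - (S.card : ℤ) := by
        intro S _
        rw [Finset.card_compl]
        have h1 : S.card ≤ Fintype.card (Fin n) := Finset.card_le_univ S
        push_cast [Nat.cast_sub h1]
        simp
      have hswap : (∑ S ∈ A, (p ((S.card : ℤ) + 1) + p ((S.card : ℤ))))
          = ∑ S ∈ A, (p ((n : ℤ) - (S.card : ℤ) + 1) + p ((n : ℤ) - (S.card : ℤ))) := by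
        apply Finset.sum_nbij' (fun S => Sᶜ) (fun S => Sᶜ) hcomplA hcomplA
          (fun S _ => by simp) (fun S _ => by simp)
        intro S hS
        rw [hcardA S hS,
          show (n : ℤ) - ((n : ℤ) - (S.card : ℤ)) = (S.card : ℤ) from by ring]
      have hconst : ∀ S ∈ A,
          (p ((S.card : ℤ) + 1) + p ((S.card : ℤ)))
            + (p ((n : ℤ) - (S.card : ℤ) + 1) + p ((n : ℤ) - (S.card : ℤ)))
          = p (k : ℤ) + p ((k : ℤ) + 1) + p ((n : ℤ) - (k : ℤ))
            + p ((n : ℤ) - (k : ℤ) + 1) := by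
        intro S hS
        rcases hsize S ((hmemA S).mp hS) with h | h
        · rw [h]; ring
        · have hcS : (S.card : ℤ) = (n : ℤ) - (k : ℤ) := by
            rw [h]; push_cast [Nat.cast_sub (by omega : k ≤ n)]; ring
          rw [hcS]
          have : (n : ℤ) - ((n : ℤ) - (k : ℤ)) = (k : ℤ) := by ring
          rw [this]
          ring
      calc (∑ S ∈ A, (p ((S.card : ℤ) + 1) + p ((S.card : ℤ))))
            + (∑ S ∈ A, (p ((S.card : ℤ) + 1) + p ((S.card : ℤ))))
          = ∑ S ∈ A, ((p ((S.card : ℤ) + 1) + p ((S.card : ℤ)))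
              + (p ((n : ℤ) - (S.card : ℤ) + 1) + p ((n : ℤ) - (S.card : ℤ)))) := by
            nth_rewrite 2 [hswap]
            rw [← Finset.sum_add_distrib]
        _ = ∑ S ∈ A, (p (k : ℤ) + p ((k : ℤ) + 1) + p ((n : ℤ) - (k : ℤ))
              + p ((n : ℤ) - (k : ℤ) + 1)) := Finset.sum_congr rfl hconst
        _ = (N : ℝ) * (p (k : ℤ) + p ((k : ℤ) + 1) + p ((n : ℤ) - (k : ℤ))
              + p ((n : ℤ) - (k : ℤ) + 1)) := by
            rw [Finset.sum_const, nsmul_eq_mul, hNA]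
    rw [hsum1, hsum4]
    rw [hT]
    have : (∑ y : Fin n → Bool, if s y = m then p (wt y + 1) + p (wt y) else 0)
        + (∑ y : Fin n → Bool, if s y = m then p (wt y + 1) + p (wt y) else 0)
        = (N : ℝ) * (p (k : ℤ) + p ((k : ℤ) + 1) + p ((n : ℤ) - (k : ℤ))
            + p ((n : ℤ) - (k : ℤ) + 1)) := hsum2
    linarith
  -- positivity of the normalizer
  have hlam_pos : 0 < lam (n + 2) p := by
    obtain ⟨t, ht, hpt⟩ : ∃ t ∈ Finset.range (n + 2), 0 < p (t : ℤ) := by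
      by_contra hcon
      push_neg at hcon
      have hz : ∑ t ∈ Finset.range (n + 2), ((n + 1).choose t : ℝ) * p (t : ℤ) = 0 := by
        apply Finset.sum_eq_zero
        intro t ht
        have : p (t : ℤ) = 0 := le_antisymm (hcon t ht) (hp_nonneg _)
        rw [this, mul_zero]
      rw [hp_sum] at hz
      norm_num at hz
    rw [Finset.mem_range] at ht
    set x0 : Fin (n + 2) → Bool := fun i => decide ((i : ℕ) < t) with hx0
    have hwt0 : wt x0 = (t : ℤ) := by
      unfold wt
      congr 1
      have hfe : (Finset.univ.filter fun i : Fin (n+2) => x0 i = true)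
          = Finset.Iio (⟨t, by omega⟩ : Fin (n + 2)) := by
        ext i
        simp [hx0, Fin.lt_def]
      rw [hfe, Fin.card_Iio]
    apply Finset.sum_pos'
    · intro x _
      exact add_nonneg (hp_nonneg _) (hp_nonneg _)
    · refine ⟨x0, Finset.mem_univ _, ?_⟩
      unfold mu'
      rw [hwt0]
      have := hp_nonneg ((t : ℤ) - 1)
      linarith
  have hlam_ne : lam (n + 2) p ≠ 0 := ne_of_gt hlam_pos
  -- final assembly
  have hmu_eq : (∑ x : Fin (n + 2) → Bool, if dotp w x = 0 then mu p x else 0)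
      = T / lam (n + 2) p := by
    have hcg : ∀ x : Fin (n + 2) → Bool,
        (if dotp w x = 0 then mu p x else 0)
          = (if dotp w x = 0 then mu' p x else 0) / lam (n + 2) p := by
      intro x
      unfold mu
      split <;> simp
    rw [Finset.sum_congr rfl (fun x _ => hcg x), ← Finset.sum_div, key]
  constructor
  · rw [hmu_eq, hT]
  · intro hd
    rw [hmu_eq, hT]
    field_simp
    ring
end
end

section
/- Let n ≥ 1, let a_1,…,a_n be positive integers with A = Σ_{i=1}^n a_i, and let 0 < y < 1/2. Define the vectors c = (2a_1, 2a_2, …, 2a_n, −A, −A), d = (a_1 − y, a_2, …, a_n, −A/2 + y/2, −A/2 + y/2), and e = (a_1 + y, a_2, …, a_n, −A/2 − y/2, −A/2 − y/2) in ℝ^{n+2}. Then for every x ∈ {-1,1}^{n+2}: |d·x| + |e·x| − |c·x| equals 2y if c·x = 0 and x ∉ {(1,…,1), (−1,…,−1)}, and equals 0 otherwise. -/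
open Finset

noncomputable section

open scoped Classical

lemma chi_cases (b : Bool) : chi b = 1 ∨ chi b = -1 := by cases b <;> simp [chi]

lemma abs_tri (D u : ℝ) (hD : 1 ≤ |D|) (hu : |u| < 1) : |D - u| + |D + u| - |2*D| = 0 := by
  rcases abs_lt.mp hu with ⟨h1, h2⟩
  rcases le_total 0 D with h | h
  · have hD' : 1 ≤ D := by rwa [abs_of_nonneg h] at hD
    rw [abs_of_pos (by linarith), abs_of_pos (by linarith), abs_of_pos (by linarith)]; ring
  · have hD' : D ≤ -1 := by rw [abs_of_nonpos h] at hD; linarith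
    rw [abs_of_neg (by linarith), abs_of_neg (by linarith), abs_of_neg (by linarith)]; ring


set_option maxHeartbeats 2000000 in
theorem stmt4 (n : ℕ) (hn : 1 ≤ n) (a : Fin n → ℤ) (ha : ∀ i, 0 < a i)
    (A : ℤ) (hA : A = ∑ i, a i)
    (y : ℝ) (hy0 : 0 < y) (hy1 : y < 1 / 2)
    (c d e : Fin (n + 2) → ℝ)
    (hc : ∀ i : Fin (n + 2), c i =
      if h : (i : ℕ) < n then 2 * (a ⟨i, h⟩ : ℝ) else -(A : ℝ))
    (hd : ∀ i : Fin (n + 2), d i =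
      if h : (i : ℕ) < n then (a ⟨i, h⟩ : ℝ) - (if (i : ℕ) = 0 then y else 0)
      else -(A : ℝ) / 2 + y / 2)
    (he : ∀ i : Fin (n + 2), e i =
      if h : (i : ℕ) < n then (a ⟨i, h⟩ : ℝ) + (if (i : ℕ) = 0 then y else 0)
      else -(A : ℝ) / 2 - y / 2) :
    ∀ x : Fin (n + 2) → Bool,
      |dotp d x| + |dotp e x| - |dotp c x| =
        if dotp c x = 0 ∧ x ≠ (fun _ => true) ∧ x ≠ (fun _ => false) then 2 * y
        else 0 := by
  intro x
  set i0 : Fin (n+2) := ⟨0, by omega⟩ with hi0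
  set iN : Fin (n+2) := ⟨n, by omega⟩ with hiN
  set iN1 : Fin (n+2) := ⟨n+1, by omega⟩ with hiN1
  set emb : Fin n → Fin (n+2) := fun i => Fin.castLE (by omega) i with hemb
  have expand : ∀ w : Fin (n+2) → ℝ, dotp w x =
      (∑ i : Fin n, w (emb i) * chi (x (emb i))) + w iN * chi (x iN) + w iN1 * chi (x iN1) := by
    intro w
    rw [dotp, Fin.sum_univ_castSucc, Fin.sum_univ_castSucc]
    rfl
  have hembval : ∀ i : Fin n, ((emb i : ℕ)) = (i : ℕ) := fun i => rfl
  have hNlt : ¬ ((iN : ℕ) < n) := Nat.lt_irrefl n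
  have hN1lt : ¬ ((iN1 : ℕ) < n) := fun h => absurd (show n+1 < n from h) (by omega)
  obtain ⟨Szr, hSzr⟩ : ∃ S : ℝ, S = ∑ i : Fin n, (a i : ℝ) * chi (x (emb i)) := ⟨_, rfl⟩
  obtain ⟨Sz, hSz⟩ : ∃ S : ℤ, S = ∑ i : Fin n, a i * (if x (emb i) then 1 else -1) := ⟨_, rfl⟩
  have hcast : Szr = (Sz : ℝ) := by
    rw [hSzr, hSz]
    push_cast
    refine Finset.sum_congr rfl fun i _ => ?_
    by_cases h : x (emb i) <;> simp [h, chi]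
  have hone : ∀ z : ℝ, (∑ i : Fin n, (if (emb i : ℕ) = 0 then z else 0) * chi (x (emb i)))
      = z * chi (x i0) := by
    intro z
    rw [Finset.sum_eq_single_of_mem (⟨0, hn⟩ : Fin n) (Finset.mem_univ _)]
    · have h0 : emb ⟨0, hn⟩ = i0 := rfl
      rw [h0]
      rw [if_pos (show (i0 : ℕ) = 0 from rfl)]
    · intro i _ hne
      have hv : (emb i : ℕ) ≠ 0 := fun h => hne (Fin.ext h)
      simp [hv]
  have heta : ∀ (i : Fin n) (h : (emb i : ℕ) < n), (⟨(emb i : ℕ), h⟩ : Fin n) = i :=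
    fun i h => Fin.ext (hembval i)
  have hci : ∀ i : Fin n, c (emb i) = 2 * (a i : ℝ) := fun i => by
    rw [hc (emb i), dif_pos (show (emb i : ℕ) < n from i.isLt), heta i]
  have hdi : ∀ i : Fin n, d (emb i) = (a i : ℝ) - (if (emb i : ℕ) = 0 then y else 0) := fun i => by
    rw [hd (emb i), dif_pos (show (emb i : ℕ) < n from i.isLt), heta i]
  have hei : ∀ i : Fin n, e (emb i) = (a i : ℝ) + (if (emb i : ℕ) = 0 then y else 0) := fun i => by
    rw [he (emb i), dif_pos (show (emb i : ℕ) < n from i.isLt), heta i]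
  have hc2 : dotp c x = 2 * Szr - (A:ℝ) * (chi (x iN) + chi (x iN1)) := by
    have h1 : ∑ i : Fin n, c (emb i) * chi (x (emb i)) = 2 * Szr := by
      rw [hSzr, Finset.mul_sum]
      refine Finset.sum_congr rfl fun i _ => ?_
      rw [hci i]; ring
    rw [expand c, h1, hc iN, dif_neg hNlt, hc iN1, dif_neg hN1lt]; ring
  have hd2 : dotp d x = Szr - y * chi (x i0) + (-(A:ℝ)/2 + y/2) * (chi (x iN) + chi (x iN1)) := by
    have h1 : ∑ i : Fin n, d (emb i) * chi (x (emb i)) = Szr - y * chi (x i0) := by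
      have h2 : ∑ i : Fin n, d (emb i) * chi (x (emb i)) =
          ∑ i : Fin n, ((a i : ℝ) * chi (x (emb i)) - (if (emb i : ℕ) = 0 then y else 0) * chi (x (emb i))) := by
        refine Finset.sum_congr rfl fun i _ => ?_
        rw [hdi i]; ring
      rw [h2, Finset.sum_sub_distrib, hone y, hSzr]
    rw [expand d, h1, hd iN, dif_neg hNlt, hd iN1, dif_neg hN1lt]; ring
  have he2 : dotp e x = Szr + y * chi (x i0) + (-(A:ℝ)/2 - y/2) * (chi (x iN) + chi (x iN1)) := by
    have h1 : ∑ i : Fin n, e (emb i) * chi (x (emb i)) = Szr + y * chi (x i0) := by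
      have h2 : ∑ i : Fin n, e (emb i) * chi (x (emb i)) =
          ∑ i : Fin n, ((a i : ℝ) * chi (x (emb i)) + (if (emb i : ℕ) = 0 then y else 0) * chi (x (emb i))) := by
        refine Finset.sum_congr rfl fun i _ => ?_
        rw [hei i]; ring
      rw [h2, Finset.sum_add_distrib, hone y, hSzr]
    rw [expand e, h1, he iN, dif_neg hNlt, he iN1, dif_neg hN1lt]; ring
  have hct : chi true = 1 := by simp [chi]
  have hcf : chi false = -1 := by simp [chi]
  -- extremality
  have hgpos : ∀ i : Fin n, 0 ≤ a i * (1 - (if x (emb i) then (1:ℤ) else -1)) := by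
    intro i; by_cases h : x (emb i) <;> simp [h] <;> nlinarith [ha i]
  have hgpos' : ∀ i : Fin n, 0 ≤ a i * (1 + (if x (emb i) then (1:ℤ) else -1)) := by
    intro i; by_cases h : x (emb i) <;> simp [h] <;> nlinarith [ha i]
  have hdiff1 : A - Sz = ∑ i : Fin n, a i * (1 - (if x (emb i) then (1:ℤ) else -1)) := by
    rw [hA, hSz, ← Finset.sum_sub_distrib]
    exact Finset.sum_congr rfl fun i _ => by ring
  have hdiff2 : A + Sz = ∑ i : Fin n, a i * (1 + (if x (emb i) then (1:ℤ) else -1)) := by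
    rw [hA, hSz, ← Finset.sum_add_distrib]
    exact Finset.sum_congr rfl fun i _ => by ring
  have hmaxt : Sz = A → ∀ i : Fin n, x (emb i) = true := by
    intro hEq i
    have h0 : ∑ i : Fin n, a i * (1 - (if x (emb i) then (1:ℤ) else -1)) = 0 := by
      rw [← hdiff1, hEq]; ring
    have h1 := (Finset.sum_eq_zero_iff_of_nonneg (fun i _ => hgpos i)).mp h0 i (Finset.mem_univ i)
    by_cases h : x (emb i)
    · exact h
    · exfalso; rw [if_neg h] at h1; nlinarith [ha i]
  have hminf : Sz = -A → ∀ i : Fin n, x (emb i) = false := by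
    intro hEq i
    have h0 : ∑ i : Fin n, a i * (1 + (if x (emb i) then (1:ℤ) else -1)) = 0 := by
      rw [← hdiff2, hEq]; ring
    have h1 := (Finset.sum_eq_zero_iff_of_nonneg (fun i _ => hgpos' i)).mp h0 i (Finset.mem_univ i)
    by_cases h : x (emb i)
    · exfalso; rw [if_pos h] at h1; nlinarith [ha i]
    · simpa using h
  -- building constant vectors
  have hallt : (∀ i : Fin n, x (emb i) = true) → x iN = true → x iN1 = true → x = (fun _ => true) := by
    intro h1 h2 h3
    funext j
    by_cases hj : (j : ℕ) < n
    · have : emb ⟨(j:ℕ), hj⟩ = j := Fin.ext rfl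
      rw [← this]; exact h1 _
    · rcases (show (j:ℕ) = n ∨ (j:ℕ) = n + 1 by omega) with h | h
      · rw [show j = iN from Fin.ext h]; exact h2
      · rw [show j = iN1 from Fin.ext h]; exact h3
  have hallf : (∀ i : Fin n, x (emb i) = false) → x iN = false → x iN1 = false → x = (fun _ => false) := by
    intro h1 h2 h3
    funext j
    by_cases hj : (j : ℕ) < n
    · have : emb ⟨(j:ℕ), hj⟩ = j := Fin.ext rfl
      rw [← this]; exact h1 _
    · rcases (show (j:ℕ) = n ∨ (j:ℕ) = n + 1 by omega) with h | h
      · rw [show j = iN from Fin.ext h]; exact h2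
      · rw [show j = iN1 from Fin.ext h]; exact h3
  have hemb0 : emb ⟨0, hn⟩ = i0 := Fin.ext rfl
  by_cases hC : dotp c x = 0
  · -- c·x = 0
    cases hxn : x iN <;> cases hxn1 : x iN1
    · -- both false : forces all false
      have hSzA : Sz = -A := by
        have : 2 * Szr + 2 * (A:ℝ) = 0 := by rw [hxn, hxn1, hcf] at hc2; linarith [hc2 ▸ hC]
        have : Szr = -(A:ℝ) := by linarith
        rw [hcast] at this; exact_mod_cast this
      have hxf : x = fun _ => false := hallf (hminf hSzA) hxn hxn1
      rw [if_neg (by rintro ⟨-, -, hne⟩; exact hne hxf)]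
      have hchi0 : chi (x i0) = -1 := by rw [← hemb0, hminf hSzA ⟨0, hn⟩, hcf]
      have hSzrA : Szr = -(A:ℝ) := by rw [hcast, hSzA]; push_cast; ring
      have hd0 : dotp d x = 0 := by rw [hd2, hchi0, hxn, hxn1, hcf, hSzrA]; ring
      have he0 : dotp e x = 0 := by rw [he2, hchi0, hxn, hxn1, hcf, hSzrA]; ring
      rw [hd0, he0, hC]; simp
    · -- iN false, iN1 true : mixed
      have ht : chi (x iN) + chi (x iN1) = 0 := by rw [hxn, hxn1, hcf, hct]; ring
      have hS0 : Szr = 0 := by rw [ht] at hc2; rw [hC] at hc2; linarith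
      have hd0 : dotp d x = -(y * chi (x i0)) := by rw [hd2, hS0, ht]; ring
      have he0 : dotp e x = y * chi (x i0) := by rw [he2, hS0, ht]; ring
      rw [if_pos ⟨hC, fun hne => by rw [hne] at hxn; exact Bool.noConfusion hxn,
        fun hne => by rw [hne] at hxn1; exact Bool.noConfusion hxn1⟩]
      rw [hd0, he0, hC, abs_zero, abs_neg]
      rcases chi_cases (x i0) with h | h
      · rw [h, show y * (1:ℝ) = y from by ring, abs_of_pos hy0]; ring
      · rw [h, show y * (-1:ℝ) = -y from by ring, abs_neg, abs_of_pos hy0]; ring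
    · -- iN true, iN1 false : mixed
      have ht : chi (x iN) + chi (x iN1) = 0 := by rw [hxn, hxn1, hcf, hct]; ring
      have hS0 : Szr = 0 := by rw [ht] at hc2; rw [hC] at hc2; linarith
      have hd0 : dotp d x = -(y * chi (x i0)) := by rw [hd2, hS0, ht]; ring
      have he0 : dotp e x = y * chi (x i0) := by rw [he2, hS0, ht]; ring
      rw [if_pos ⟨hC, fun hne => by rw [hne] at hxn1; exact Bool.noConfusion hxn1,
        fun hne => by rw [hne] at hxn; exact Bool.noConfusion hxn⟩]
      rw [hd0, he0, hC, abs_zero, abs_neg]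
      rcases chi_cases (x i0) with h | h
      · rw [h, show y * (1:ℝ) = y from by ring, abs_of_pos hy0]; ring
      · rw [h, show y * (-1:ℝ) = -y from by ring, abs_neg, abs_of_pos hy0]; ring
    · -- both true : forces all true
      have hSzA : Sz = A := by
        have : 2 * Szr - 2 * (A:ℝ) = 0 := by rw [hxn, hxn1, hct] at hc2; linarith [hc2 ▸ hC]
        have : Szr = (A:ℝ) := by linarith
        rw [hcast] at this; exact_mod_cast this
      have hxt : x = fun _ => true := hallt (hmaxt hSzA) hxn hxn1
      rw [if_neg (by rintro ⟨-, hne, -⟩; exact hne hxt)]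
      have hchi0 : chi (x i0) = 1 := by rw [← hemb0, hmaxt hSzA ⟨0, hn⟩, hct]
      have hSzrA : Szr = (A:ℝ) := by rw [hcast, hSzA]
      have hd0 : dotp d x = 0 := by rw [hd2, hchi0, hxn, hxn1, hct, hSzrA]; ring
      have he0 : dotp e x = 0 := by rw [he2, hchi0, hxn, hxn1, hct, hSzrA]; ring
      rw [hd0, he0, hC]; simp
  · -- c·x ≠ 0
    rw [if_neg (fun h => hC h.1)]
    obtain ⟨u, hu⟩ : ∃ u : ℝ, u = dotp e x - dotp c x / 2 := ⟨_, rfl⟩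
    have heD : dotp e x = dotp c x / 2 + u := by rw [hu]; ring
    have hdD : dotp d x = dotp c x / 2 - u := by
      have hsum : dotp d x + dotp e x = dotp c x := by rw [hc2, hd2, he2]; ring
      rw [hu]; linarith
    have hueq : u = y * chi (x i0) - y/2 * (chi (x iN) + chi (x iN1)) := by
      rw [hu, he2, hc2]; ring
    have habs1 : ∀ b : Bool, |chi b| = 1 := by intro b; cases b <;> simp [chi]
    have hu1 : |u| < 1 := by
      have h1 : |y * chi (x i0)| = y := by
        rw [abs_mul, habs1, abs_of_pos hy0, mul_one]
      have h2 : |y/2 * (chi (x iN) + chi (x iN1))| ≤ y := by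
        rw [abs_mul]
        have h3 : |chi (x iN) + chi (x iN1)| ≤ 2 := by
          calc |chi (x iN) + chi (x iN1)| ≤ |chi (x iN)| + |chi (x iN1)| := abs_add_le _ _
            _ = 2 := by rw [habs1, habs1]; norm_num
        have hy2 : |y/2| = y/2 := abs_of_pos (by linarith)
        rw [hy2]; nlinarith
      calc |u| = |y * chi (x i0) - y/2 * (chi (x iN) + chi (x iN1))| := by rw [hueq]
        _ ≤ |y * chi (x i0)| + |y/2 * (chi (x iN) + chi (x iN1))| := abs_sub _ _
        _ ≤ y + y := by rw [h1]; linarith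
        _ < 1 := by linarith
    obtain ⟨k, hk⟩ : ∃ k : ℤ, dotp c x = 2 * (k:ℝ) := by
      cases hxn : x iN <;> cases hxn1 : x iN1
      · exact ⟨Sz + A, by rw [hc2, hcast, hxn, hxn1, hcf]; push_cast; ring⟩
      · exact ⟨Sz, by rw [hc2, hcast, hxn, hxn1, hcf, hct]; push_cast; ring⟩
      · exact ⟨Sz, by rw [hc2, hcast, hxn, hxn1, hcf, hct]; push_cast; ring⟩
      · exact ⟨Sz - A, by rw [hc2, hcast, hxn, hxn1, hct]; push_cast; ring⟩
    have hk0 : k ≠ 0 := by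
      intro h; apply hC; rw [hk, h]; simp
    have hk1 : (1:ℤ) ≤ |k| := Int.one_le_abs hk0
    have hD1 : 1 ≤ |dotp c x / 2| := by
      rw [hk, show (2 * (k:ℝ)) / 2 = (k:ℝ) by ring]
      rw [← Int.cast_abs]
      exact_mod_cast hk1
    have hfin := abs_tri (dotp c x / 2) u hD1 hu1
    calc |dotp d x| + |dotp e x| - |dotp c x|
        = |dotp c x / 2 - u| + |dotp c x / 2 + u| - |2 * (dotp c x / 2)| := by
          rw [hdD, heD]; congr 2; ring
      _ = 0 := hfin
end
end

section
/- Let n ≥ 1, let a_1,…,a_n be positive integers with A = Σ_{i=1}^n a_i, let 0 < y < 1/2, and let p = (p_0,…,p_{n+1}) be a probability vector on {-1,1}^{n+2}. Define c = (2a_1, …, 2a_n, −A, −A), d = (a_1 − y, a_2, …, a_n, −A/2 + y/2, −A/2 + y/2), and e = (a_1 + y, a_2, …, a_n, −A/2 − y/2, −A/2 − y/2). Then E_{x ∼ μ_p}[|d·x|] + E_{x ∼ μ_p}[|e·x|] − E_{x ∼ μ_p}[|c·x|] = 2y · Pr_{x ∼ μ_p}[ c·x = 0 and x ∉ {(1,…,1),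 (−1,…,−1)} ]. -/
open Finset

noncomputable section

open scoped Classical

lemma abs_add_abs_sub' (s t : ℝ) (h : |t| ≤ |s|) : |s + t| + |s - t| = 2 * |s| := by
  rcases le_or_gt 0 s with hs | hs
  · rw [abs_of_nonneg hs] at h; rw [abs_le] at h
    rw [abs_of_nonneg hs, abs_of_nonneg (by linarith), abs_of_nonneg (by linarith)]; ring
  · rw [abs_of_neg hs] at h; rw [abs_le] at h
    rw [abs_of_neg hs, abs_of_nonpos (by linarith), abs_of_nonpos (by linarith)]; ring

theorem key (n : ℕ) (hn : 1 ≤ n) (a : Fin n → ℤ) (ha : ∀ i, 0 < a i)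
    (A : ℤ) (hA : A = ∑ i, a i)
    (y : ℝ) (hy0 : 0 < y) (hy1 : y < 1 / 2)
    (c d e : Fin (n + 2) → ℝ)
    (hc : ∀ i : Fin (n + 2), c i =
      if h : (i : ℕ) < n then 2 * (a ⟨i, h⟩ : ℝ) else -(A : ℝ))
    (hd : ∀ i : Fin (n + 2), d i =
      if h : (i : ℕ) < n then (a ⟨i, h⟩ : ℝ) - (if (i : ℕ) = 0 then y else 0)
      else -(A : ℝ) / 2 + y / 2)
    (he : ∀ i : Fin (n + 2), e i =
      if h : (i : ℕ) < n then (a ⟨i, h⟩ : ℝ) + (if (i : ℕ) = 0 then y else 0)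
      else -(A : ℝ) / 2 - y / 2)
    (x : Fin (n + 2) → Bool) :
    |dotp d x| + |dotp e x| - |dotp c x|
      = if dotp c x = 0 ∧ x ≠ (fun _ => true) ∧ x ≠ (fun _ => false)
        then 2 * y else 0 := by
  have hnlt : n < n + 2 := by omega
  have hn1lt : n + 1 < n + 2 := by omega
  set emb : Fin n → Fin (n + 2) := fun j => ⟨j.1, by omega⟩ with hemb
  have expand : ∀ w : Fin (n + 2) → ℝ, dotp w x
      = (∑ j : Fin n, w (emb j) * chi (x (emb j)))
        + w ⟨n, hnlt⟩ * chi (x ⟨n, hnlt⟩)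
        + w ⟨n + 1, hn1lt⟩ * chi (x ⟨n + 1, hn1lt⟩) := by
    intro w
    rw [dotp, Fin.sum_univ_castSucc, Fin.sum_univ_castSucc]
    rfl
  set Sz : ℤ := ∑ j : Fin n, a j * (if x (emb j) then 1 else -1) with hSzdef
  have hSr : (∑ j : Fin n, (a j : ℝ) * chi (x (emb j))) = (Sz : ℝ) := by
    rw [hSzdef]; push_cast
    exact Finset.sum_congr rfl fun j _ => by by_cases h : x (emb j) <;> simp [chi, h]
  have hcemb : ∀ j : Fin n, c (emb j) = 2 * (a j : ℝ) := fun j => by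
    rw [hc, dif_pos j.2]
  have hdemb : ∀ j : Fin n, d (emb j)
      = (a j : ℝ) - (if (j : ℕ) = 0 then y else 0) := fun j => by
    rw [hd, dif_pos j.2]
  have heemb : ∀ j : Fin n, e (emb j)
      = (a j : ℝ) + (if (j : ℕ) = 0 then y else 0) := fun j => by
    rw [he, dif_pos j.2]
  have hcn : c ⟨n, hnlt⟩ = -(A : ℝ) := by rw [hc, dif_neg (lt_irrefl n)]
  have hcn1 : c ⟨n + 1, hn1lt⟩ = -(A : ℝ) := by rw [hc, dif_neg (by norm_num)]
  have hdn : d ⟨n, hnlt⟩ = -(A : ℝ) / 2 + y / 2 := by rw [hd, dif_neg (lt_irrefl n)]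
  have hdn1 : d ⟨n + 1, hn1lt⟩ = -(A : ℝ) / 2 + y / 2 := by rw [hd, dif_neg (by norm_num)]
  have hen : e ⟨n, hnlt⟩ = -(A : ℝ) / 2 - y / 2 := by rw [he, dif_neg (lt_irrefl n)]
  have hen1 : e ⟨n + 1, hn1lt⟩ = -(A : ℝ) / 2 - y / 2 := by rw [he, dif_neg (by norm_num)]
  set z : ℝ := chi (x (emb ⟨0, hn⟩)) with hzdef
  set u : ℝ := chi (x ⟨n, hnlt⟩) with hudef
  set v : ℝ := chi (x ⟨n + 1, hn1lt⟩) with hvdef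
  have hite : ∀ (s : ℝ), ∀ j : Fin n, (if (j : ℕ) = 0 then s else 0) * chi (x (emb j))
      = if j = ⟨0, hn⟩ then s * z else 0 := by
    intro s j
    by_cases hj : j = (⟨0, hn⟩ : Fin n)
    · subst hj; simp [hzdef]
    · have h0 : (j : ℕ) ≠ 0 := fun h => hj (Fin.ext h)
      simp [h0, hj]
  have hitesum : ∀ s : ℝ, (∑ j : Fin n, (if (j : ℕ) = 0 then s else 0) * chi (x (emb j))) = s * z := by
    intro s
    rw [Finset.sum_congr rfl fun j _ => hite s j, Finset.sum_ite_eq' Finset.univ]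
    simp
  have hC : dotp c x = 2 * (Sz : ℝ) - (A : ℝ) * (u + v) := by
    rw [expand c, hcn, hcn1,
      show (∑ j : Fin n, c (emb j) * chi (x (emb j))) = 2 * (Sz : ℝ) by
        rw [← hSr, Finset.mul_sum]; exact Finset.sum_congr rfl fun j _ => by rw [hcemb]; ring]
    ring
  have hD : dotp d x = dotp c x / 2 + y * (-z + (u + v) / 2) := by
    rw [expand d, hdn, hdn1, hC,
      show (∑ j : Fin n, d (emb j) * chi (x (emb j))) = (Sz : ℝ) - y * z by
        rw [show (∑ j : Fin n, d (emb j) * chi (x (emb j)))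
            = (∑ j : Fin n, ((a j : ℝ) * chi (x (emb j))
              - (if (j : ℕ) = 0 then y else 0) * chi (x (emb j)))) from
          Finset.sum_congr rfl fun j _ => by rw [hdemb]; ring,
          Finset.sum_sub_distrib, hSr, hitesum]]
    ring
  have hE : dotp e x = dotp c x / 2 - y * (-z + (u + v) / 2) := by
    rw [expand e, hen, hen1, hC,
      show (∑ j : Fin n, e (emb j) * chi (x (emb j))) = (Sz : ℝ) + y * z by
        rw [show (∑ j : Fin n, e (emb j) * chi (x (emb j)))
            = (∑ j : Fin n, ((a j : ℝ) * chi (x (emb j))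
              + (if (j : ℕ) = 0 then y else 0) * chi (x (emb j)))) from
          Finset.sum_congr rfl fun j _ => by rw [heemb]; ring,
          Finset.sum_add_distrib, hSr, hitesum]]
    ring
  have hz1 : z = 1 ∨ z = -1 := by
    rw [hzdef]; by_cases h : x (emb ⟨0, hn⟩) <;> simp [chi, h]
  have hu1 : u = 1 ∨ u = -1 := by
    rw [hudef]; by_cases h : x ⟨n, hnlt⟩ <;> simp [chi, h]
  have hv1 : v = 1 ∨ v = -1 := by
    rw [hvdef]; by_cases h : x ⟨n + 1, hn1lt⟩ <;> simp [chi, h]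
  have hW2 : |(-z + (u + v) / 2)| ≤ 2 := by
    rcases hz1 with h1 | h1 <;> rcases hu1 with h2 | h2 <;> rcases hv1 with h3 | h3 <;>
      rw [h1, h2, h3] <;> norm_num
  by_cases hC0 : dotp c x = 0
  · -- c·x = 0 case
    by_cases huv : x ⟨n, hnlt⟩ = x ⟨n + 1, hn1lt⟩
    · cases hbu : x ⟨n, hnlt⟩ with
      | false =>
        have hbv : x ⟨n + 1, hn1lt⟩ = false := by rw [← huv, hbu]
        have hu' : u = -1 := by rw [hudef, hbu]; simp [chi]
        have hv' : v = -1 := by rw [hvdef, hbv]; simp [chi]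
        have hSA : Sz = -A := by
          have : (2 : ℝ) * (Sz : ℝ) - (A : ℝ) * (u + v) = 0 := by rw [← hC]; exact hC0
          rw [hu', hv'] at this
          have : (Sz : ℝ) = ((-A : ℤ) : ℝ) := by push_cast; linarith
          exact_mod_cast this
        have hall : ∀ j : Fin n, x (emb j) = false := by
          by_contra hcon
          push_neg at hcon
          obtain ⟨j, hj⟩ := hcon
          have hjx : x (emb j) = true := by simpa using hj
          have hlt : -A < Sz := by
            rw [hA, hSzdef, ← Finset.sum_neg_distrib]
            refine Finset.sum_lt_sum (fun i _ => ?_) ⟨j, Finset.mem_univ j, ?_⟩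
            · by_cases h : x (emb i) <;> simp [h] <;> nlinarith [ha i]
            · simp [hjx]; nlinarith [ha j]
          omega
        have hxf : x = fun _ => false := by
          funext k
          by_cases hk : (k : ℕ) < n
          · have hek : emb ⟨(k : ℕ), hk⟩ = k := rfl
            rw [← hek]; exact hall _
          · have : (k : ℕ) = n ∨ (k : ℕ) = n + 1 := by omega
            rcases this with h | h
            · rw [show k = ⟨n, hnlt⟩ from Fin.ext h]; exact hbu
            · rw [show k = ⟨n + 1, hn1lt⟩ from Fin.ext h]; exact hbv
        rw [if_neg (fun h => h.2.2 hxf)]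
        have hz' : z = -1 := by rw [hzdef, hall ⟨0, hn⟩]; simp [chi]
        rw [hD, hE, hC0, hz', hu', hv']
        norm_num
      | true =>
        have hbv : x ⟨n + 1, hn1lt⟩ = true := by rw [← huv, hbu]
        have hu' : u = 1 := by rw [hudef, hbu]; simp [chi]
        have hv' : v = 1 := by rw [hvdef, hbv]; simp [chi]
        have hSA : Sz = A := by
          have : (2 : ℝ) * (Sz : ℝ) - (A : ℝ) * (u + v) = 0 := by rw [← hC]; exact hC0
          rw [hu', hv'] at this
          have : (Sz : ℝ) = (A : ℝ) := by linarith
          exact_mod_cast this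
        have hall : ∀ j : Fin n, x (emb j) = true := by
          by_contra hcon
          push_neg at hcon
          obtain ⟨j, hj⟩ := hcon
          have hjx : x (emb j) = false := by simpa using hj
          have hlt : Sz < A := by
            rw [hA, hSzdef]
            refine Finset.sum_lt_sum (fun i _ => ?_) ⟨j, Finset.mem_univ j, ?_⟩
            · by_cases h : x (emb i) <;> simp [h] <;> nlinarith [ha i]
            · simp [hjx]; nlinarith [ha j]
          omega
        have hxf : x = fun _ => true := by
          funext k
          by_cases hk : (k : ℕ) < n
          · have hek : emb ⟨(k : ℕ), hk⟩ = k := rfl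
            rw [← hek]; exact hall _
          · have : (k : ℕ) = n ∨ (k : ℕ) = n + 1 := by omega
            rcases this with h | h
            · rw [show k = ⟨n, hnlt⟩ from Fin.ext h]; exact hbu
            · rw [show k = ⟨n + 1, hn1lt⟩ from Fin.ext h]; exact hbv
        rw [if_neg (fun h => h.2.1 hxf)]
        have hz' : z = 1 := by rw [hzdef, hall ⟨0, hn⟩]; simp [chi]
        rw [hD, hE, hC0, hz', hu', hv']
        norm_num
    · -- x_n ≠ x_{n+1}
      have hx1 : x ≠ fun _ => true := fun h => huv (by rw [h])
      have hx2 : x ≠ fun _ => false := fun h => huv (by rw [h])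
      rw [if_pos ⟨hC0, hx1, hx2⟩]
      have huv0 : u + v = 0 := by
        rw [hudef, hvdef]
        cases h1 : x ⟨n, hnlt⟩ <;> cases h2 : x ⟨n + 1, hn1lt⟩
        · exact absurd (h1.trans h2.symm) huv
        · simp [chi]
        · simp [chi]
        · exact absurd (h1.trans h2.symm) huv
      rw [hD, hE, hC0, huv0]
      rcases hz1 with h | h <;> rw [h]
      · rw [show (0:ℝ)/2 + y * (-1 + 0/2) = -y from by ring,
          show (0:ℝ)/2 - y * (-1 + 0/2) = y from by ring,
          abs_neg, abs_of_pos hy0, abs_zero]; ring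
      · rw [show (0:ℝ)/2 + y * (-(-1) + 0/2) = y from by ring,
          show (0:ℝ)/2 - y * (-(-1) + 0/2) = -y from by ring,
          abs_neg, abs_of_pos hy0, abs_zero]; ring
  · -- c·x ≠ 0 case
    rw [if_neg (fun h => hC0 h.1)]
    have h2k : ∃ k : ℤ, dotp c x = 2 * (k : ℝ) := by
      rcases hu1 with h | h <;> rcases hv1 with h' | h' <;> rw [hC, h, h']
      · exact ⟨Sz - A, by push_cast; ring⟩
      · exact ⟨Sz, by push_cast; ring⟩
      · exact ⟨Sz, by push_cast; ring⟩
      · exact ⟨Sz + A, by push_cast; ring⟩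
    obtain ⟨k, hk⟩ := h2k
    have hk0 : k ≠ 0 := by
      rintro rfl
      exact hC0 (by rw [hk]; norm_num)
    have h1k : (1 : ℝ) ≤ |(k : ℝ)| := by
      have := Int.one_le_abs hk0
      calc (1 : ℝ) ≤ ((|k| : ℤ) : ℝ) := by exact_mod_cast this
      _ = |(k : ℝ)| := by push_cast; rfl
    have habs : |y * (-z + (u + v) / 2)| ≤ |dotp c x / 2| := by
      calc |y * (-z + (u + v) / 2)| = y * |(-z + (u + v) / 2)| := by
            rw [abs_mul, abs_of_pos hy0]
        _ ≤ y * 2 := mul_le_mul_of_nonneg_left hW2 hy0.le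
        _ ≤ 1 := by linarith
        _ ≤ |(k : ℝ)| := h1k
        _ = |dotp c x / 2| := by rw [hk, show (2 : ℝ) * (k : ℝ) / 2 = (k : ℝ) from by ring]
    rw [hD, hE, abs_add_abs_sub' _ _ habs, hk,
      show (2 : ℝ) * (k : ℝ) / 2 = (k : ℝ) from by ring, abs_mul]
    norm_num

theorem stmt5 (n : ℕ) (hn : 1 ≤ n) (a : Fin n → ℤ) (ha : ∀ i, 0 < a i)
    (A : ℤ) (hA : A = ∑ i, a i)
    (y : ℝ) (hy0 : 0 < y) (hy1 : y < 1 / 2)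
    (p : ℤ → ℝ)
    (hp_nonneg : ∀ t : ℤ, 0 ≤ p t)
    (hp_out : ∀ t : ℤ, (t < 0 ∨ (n : ℤ) + 2 ≤ t) → p t = 0)
    (hp_sum : ∑ t ∈ Finset.range (n + 2), ((n + 1).choose t : ℝ) * p (t : ℤ) = 1)
    (c d e : Fin (n + 2) → ℝ)
    (hc : ∀ i : Fin (n + 2), c i =
      if h : (i : ℕ) < n then 2 * (a ⟨i, h⟩ : ℝ) else -(A : ℝ))
    (hd : ∀ i : Fin (n + 2), d i =
      if h : (i : ℕ) < n then (a ⟨i, h⟩ : ℝ) - (if (i : ℕ) = 0 then y else 0)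
      else -(A : ℝ) / 2 + y / 2)
    (he : ∀ i : Fin (n + 2), e i =
      if h : (i : ℕ) < n then (a ⟨i, h⟩ : ℝ) + (if (i : ℕ) = 0 then y else 0)
      else -(A : ℝ) / 2 - y / 2) :
    (∑ x : Fin (n + 2) → Bool, mu p x * |dotp d x|)
      + (∑ x : Fin (n + 2) → Bool, mu p x * |dotp e x|)
      - (∑ x : Fin (n + 2) → Bool, mu p x * |dotp c x|)
    = 2 * y * ∑ x : Fin (n + 2) → Bool,
        if dotp c x = 0 ∧ x ≠ (fun _ => true) ∧ x ≠ (fun _ => false) then mu p x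
        else 0 := by
  have hkey : ∀ x : Fin (n + 2) → Bool,
      mu p x * |dotp d x| + mu p x * |dotp e x| - mu p x * |dotp c x|
      = 2 * y * (if dotp c x = 0 ∧ x ≠ (fun _ => true) ∧ x ≠ (fun _ => false)
          then mu p x else 0) := by
    intro x
    have h := key n hn a ha A hA y hy0 hy1 c d e hc hd he x
    rw [show mu p x * |dotp d x| + mu p x * |dotp e x| - mu p x * |dotp c x|
        = mu p x * (|dotp d x| + |dotp e x| - |dotp c x|) from by ring, h]
    split_ifs <;> ring
  rw [← Finset.sum_add_distrib, ← Finset.sum_sub_distrib, Finset.mul_sum]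
  exact Finset.sum_congr rfl fun x _ => hkey x
end
end

section
/- Let n ≥ 1, let a_1,…,a_n be positive integers with A = Σ_{i=1}^n a_i, let 0 < y < 1/2, and let p = (p_0,…,p_{n+1}) be a probability vector on {-1,1}^{n+2}. Define a' = (a_1, …, a_n, −A/2, −A/2), c = 2a', d = (a_1 − y, a_2, …, a_n, −A/2 + y/2, −A/2 + y/2), and e = (a_1 + y, a_2, …, a_n, −A/2 − y/2, −A/2 − y/2), and for v ∈ ℝ^{n+2} let K_{μ_p}(v) = E_{x ∼ μ_p}[|v·x|] denote the Khintchine constant of v with respect to μ_p. Then Pr_{x ∼ μ_p}[a'·x = 0] = ( K_{μ_p}(d) + K_{μ_p}(e) − K_{μ_p}(c) ) / (2y) + (p_0 + p_{n+1}) / Λ(p). -/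
open Finset

noncomputable section

open scoped Classical

lemma abs_identity (a b : ℝ) (h : |b| ≤ |a|) : |a + b| + |a - b| = 2 * |a| := by
  rcases abs_cases a with ⟨h1,h1'⟩|⟨h1,h1'⟩ <;> rcases abs_cases b with ⟨h2,h2'⟩|⟨h2,h2'⟩ <;>
  rcases abs_cases (a+b) with ⟨h3,h3'⟩|⟨h3,h3'⟩ <;> rcases abs_cases (a-b) with ⟨h4,h4'⟩|⟨h4,h4'⟩ <;>
  linarith

def emb2 (n : ℕ) (i : Fin n) : Fin (n+2) := ⟨i, by omega⟩
def jj1 (n : ℕ) : Fin (n+2) := ⟨n, by omega⟩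
def jj2 (n : ℕ) : Fin (n+2) := ⟨n+1, by omega⟩

lemma dotp_split (n : ℕ) (w : Fin (n+2) → ℝ) (x : Fin (n+2) → Bool) :
    dotp w x = (∑ i : Fin n, w (emb2 n i) * chi (x (emb2 n i)))
      + w (jj1 n) * chi (x (jj1 n)) + w (jj2 n) * chi (x (jj2 n)) := by
  simp only [dotp]
  rw [Fin.sum_univ_castSucc, Fin.sum_univ_castSucc]
  rfl

theorem stmt6 (n : ℕ) (hn : 1 ≤ n) (a : Fin n → ℤ) (ha : ∀ i, 0 < a i)
    (A : ℤ) (hA : A = ∑ i, a i)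
    (y : ℝ) (hy0 : 0 < y) (hy1 : y < 1 / 2)
    (p : ℤ → ℝ)
    (hp_nonneg : ∀ t : ℤ, 0 ≤ p t)
    (hp_out : ∀ t : ℤ, (t < 0 ∨ (n : ℤ) + 2 ≤ t) → p t = 0)
    (hp_sum : ∑ t ∈ Finset.range (n + 2), ((n + 1).choose t : ℝ) * p (t : ℤ) = 1)
    (a' c d e : Fin (n + 2) → ℝ)
    (ha' : ∀ i : Fin (n + 2), a' i =
      if h : (i : ℕ) < n then (a ⟨i, h⟩ : ℝ) else -(A : ℝ) / 2)
    (hc : ∀ i : Fin (n + 2), c i = 2 * a' i)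
    (hd : ∀ i : Fin (n + 2), d i =
      if h : (i : ℕ) < n then (a ⟨i, h⟩ : ℝ) - (if (i : ℕ) = 0 then y else 0)
      else -(A : ℝ) / 2 + y / 2)
    (he : ∀ i : Fin (n + 2), e i =
      if h : (i : ℕ) < n then (a ⟨i, h⟩ : ℝ) + (if (i : ℕ) = 0 then y else 0)
      else -(A : ℝ) / 2 - y / 2) :
    (∑ x : Fin (n + 2) → Bool, if dotp a' x = 0 then mu p x else 0)
      = ((∑ x : Fin (n + 2) → Bool, mu p x * |dotp d x|)
          + (∑ x : Fin (n + 2) → Bool, mu p x * |dotp e x|)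
          - (∑ x : Fin (n + 2) → Bool, mu p x * |dotp c x|)) / (2 * y)
        + (p 0 + p ((n : ℤ) + 1)) / lam (n + 2) p := by
  have hn0 : 0 < n := hn
  set T : Fin (n+2) → Bool := fun _ => true with hT_def
  set F : Fin (n+2) → Bool := fun _ => false with hF_def
  set i0 : Fin (n+2) := emb2 n ⟨0, hn0⟩ with hi0_def
  set u : Fin (n+2) → ℝ :=
    fun i => if (i:ℕ) = 0 then -1 else if (i:ℕ) < n then 0 else 1/2 with hu_def
  -- coordinate values of a'
  have ha'emb : ∀ i : Fin n, a' (emb2 n i) = (a i : ℝ) := by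
    intro i
    rw [ha']
    have h : ((emb2 n i : Fin (n+2)) : ℕ) < n := i.2
    rw [dif_pos h]
    have h2 : (⟨((emb2 n i : Fin (n+2)) : ℕ), h⟩ : Fin n) = i := Fin.ext rfl
    rw [h2]
  have ha'j1 : a' (jj1 n) = -(A:ℝ)/2 := by
    rw [ha', dif_neg (by simp [jj1])]
  have ha'j2 : a' (jj2 n) = -(A:ℝ)/2 := by
    rw [ha', dif_neg (by simp [jj2])]
  -- d, e, c in terms of a' and u
  have hdu : ∀ i, d i = a' i + y * u i := by
    intro i
    rw [hd, ha']
    by_cases h : (i:ℕ) < n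
    · rw [dif_pos h, dif_pos h]
      by_cases h0 : (i:ℕ) = 0
      · simp only [hu_def, h0, if_pos rfl, if_true]; ring
      · simp only [hu_def, if_neg h0, if_pos h]; ring
    · rw [dif_neg h, dif_neg h]
      have h0 : ¬ (i:ℕ) = 0 := by omega
      simp only [hu_def, if_neg h0, if_neg h]; ring
  have heu : ∀ i, e i = a' i - y * u i := by
    intro i
    rw [he, ha']
    by_cases h : (i:ℕ) < n
    · rw [dif_pos h, dif_pos h]
      by_cases h0 : (i:ℕ) = 0
      · simp only [hu_def, h0, if_pos rfl, if_true]; ring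
      · simp only [hu_def, if_neg h0, if_pos h]; ring
    · rw [dif_neg h, dif_neg h]
      have h0 : ¬ (i:ℕ) = 0 := by omega
      simp only [hu_def, if_neg h0, if_neg h]; ring
  have hdd : ∀ x, dotp d x = dotp a' x + y * dotp u x := by
    intro x
    have h1 : ∀ i, d i * chi (x i) = a' i * chi (x i) + y * (u i * chi (x i)) := by
      intro i; rw [hdu i]; ring
    simp only [dotp]
    rw [Finset.sum_congr rfl (fun i _ => h1 i), Finset.sum_add_distrib, ← Finset.mul_sum]
  have hee : ∀ x, dotp e x = dotp a' x - y * dotp u x := by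
    intro x
    have h1 : ∀ i, e i * chi (x i) = a' i * chi (x i) - y * (u i * chi (x i)) := by
      intro i; rw [heu i]; ring
    simp only [dotp]
    rw [Finset.sum_congr rfl (fun i _ => h1 i), Finset.sum_sub_distrib, ← Finset.mul_sum]
  have hcc : ∀ x, dotp c x = 2 * dotp a' x := by
    intro x
    have h1 : ∀ i, c i * chi (x i) = 2 * (a' i * chi (x i)) := by
      intro i; rw [hc i]; ring
    simp only [dotp]
    rw [Finset.sum_congr rfl (fun i _ => h1 i), ← Finset.mul_sum]
  -- the value of dotp u
  have husum : ∀ x : Fin (n+2) → Bool,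
      (∑ i : Fin n, u (emb2 n i) * chi (x (emb2 n i))) = -chi (x i0) := by
    intro x
    rw [Finset.sum_eq_single (⟨0, hn0⟩ : Fin n)]
    · have h1 : u (emb2 n ⟨0, hn0⟩) = -1 := by
        simp [hu_def, emb2]
      rw [h1, hi0_def]; ring
    · intro i _ hne
      have h2 : (i:ℕ) ≠ 0 := fun h => hne (Fin.ext h)
      have h1 : u (emb2 n i) = 0 := by
        have h3 : ((emb2 n i : Fin (n+2)) : ℕ) = (i:ℕ) := rfl
        simp only [hu_def, h3, h2, i.2, ↓reduceIte]
      rw [h1]; ring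
    · intro h; exact absurd (Finset.mem_univ _) h
  have htu : ∀ x, dotp u x = -chi (x i0) + (chi (x (jj1 n)) + chi (x (jj2 n)))/2 := by
    intro x
    rw [dotp_split, husum]
    have h1 : u (jj1 n) = 1/2 := by
      have hne : ¬ (n = 0) := by omega
      simp [hu_def, jj1, hne]
    have h2 : u (jj2 n) = 1/2 := by
      have hne : ¬ (n + 1 = 0) := by omega
      have hlt : ¬ (n + 1 < n) := by omega
      simp [hu_def, jj2, hne, hlt]
    rw [h1, h2]; ring
  -- integrality
  set m : (Fin (n+2) → Bool) → ℤ := fun x =>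
    (∑ i : Fin n, a i * (if x (emb2 n i) then 1 else -1)) +
    (if x (jj1 n) then (if x (jj2 n) then -A else 0) else (if x (jj2 n) then 0 else A))
    with hm_def
  have hint : ∀ x, dotp a' x = (m x : ℝ) := by
    intro x
    rw [dotp_split]
    have hsum : (∑ i : Fin n, a' (emb2 n i) * chi (x (emb2 n i)))
        = ((∑ i : Fin n, a i * (if x (emb2 n i) then 1 else -1) : ℤ) : ℝ) := by
      push_cast
      refine Finset.sum_congr rfl fun i _ => ?_
      rw [ha'emb]
      cases hxi : x (emb2 n i) <;> simp [chi]
    rw [hsum, ha'j1, ha'j2, hm_def]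
    cases h1 : x (jj1 n) <;> cases h2 : x (jj2 n) <;>
      simp only [h1, h2, if_true, if_false, chi] <;> push_cast <;> ring
  have habs1 : ∀ x, dotp a' x ≠ 0 → 1 ≤ |dotp a' x| := by
    intro x hx
    rw [hint x] at hx ⊢
    have hmx : m x ≠ 0 := by exact_mod_cast hx
    rw [← Int.cast_abs]
    exact_mod_cast Int.one_le_abs hmx
  have ht2 : ∀ x, |dotp u x| ≤ 2 := by
    intro x
    rw [htu x]
    cases hb0 : x i0 <;> cases hb1 : x (jj1 n) <;> cases hb2 : x (jj2 n) <;>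
      simp only [chi, hb0, hb1, hb2, if_true, if_false] <;>
      rw [abs_le] <;> constructor <;> norm_num
  -- forcing lemmas
  have hforce : ∀ x : Fin (n+2) → Bool,
      (∑ i : Fin n, a i * (if x (emb2 n i) then 1 else -1)) = A →
      ∀ i : Fin n, x (emb2 n i) = true := by
    intro x hx i
    by_contra hxi
    have hxi' : x (emb2 n i) = false := by simpa using hxi
    have hle : ∀ j ∈ Finset.univ, a j * (if x (emb2 n j) then 1 else -1) ≤ a j := by
      intro j _
      cases hj : x (emb2 n j)
      · rw [if_neg (by simp)]; nlinarith [ha j]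
      · rw [if_pos rfl]; nlinarith [ha j]
    have hlt : a i * (if x (emb2 n i) then 1 else -1) < a i := by
      rw [hxi', if_neg (by simp)]; nlinarith [ha i]
    have hsl := Finset.sum_lt_sum hle ⟨i, Finset.mem_univ i, hlt⟩
    rw [hx, ← hA] at hsl
    exact lt_irrefl _ hsl
  have hforce' : ∀ x : Fin (n+2) → Bool,
      (∑ i : Fin n, a i * (if x (emb2 n i) then 1 else -1)) = -A →
      ∀ i : Fin n, x (emb2 n i) = false := by
    intro x hx i
    by_contra hxi
    have hxi' : x (emb2 n i) = true := by simpa using hxi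
    have hle : ∀ j ∈ Finset.univ, -(a j) ≤ a j * (if x (emb2 n j) then 1 else -1) := by
      intro j _
      cases hj : x (emb2 n j)
      · rw [if_neg (by simp)]; nlinarith [ha j]
      · rw [if_pos rfl]; nlinarith [ha j]
    have hlt : -(a i) < a i * (if x (emb2 n i) then 1 else -1) := by
      rw [hxi', if_pos rfl]; nlinarith [ha i]
    have hsl := Finset.sum_lt_sum hle ⟨i, Finset.mem_univ i, hlt⟩
    rw [hx, Finset.sum_neg_distrib, ← hA] at hsl
    exact lt_irrefl _ hsl
  -- extension lemmas
  have hextT : ∀ x : Fin (n+2) → Bool, (∀ i : Fin n, x (emb2 n i) = true) →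
      x (jj1 n) = true → x (jj2 n) = true → x = T := by
    intro x h1 h2 h3
    funext j
    rcases lt_trichotomy (j:ℕ) n with h|h|h
    · have hj : j = emb2 n ⟨(j:ℕ), h⟩ := Fin.ext rfl
      rw [hj, h1]
    · have hj : j = jj1 n := Fin.ext h
      rw [hj, h2]
    · have hj : j = jj2 n := Fin.ext (show (j:ℕ) = n+1 by have := j.isLt; omega)
      rw [hj, h3]
  have hextF : ∀ x : Fin (n+2) → Bool, (∀ i : Fin n, x (emb2 n i) = false) →
      x (jj1 n) = false → x (jj2 n) = false → x = F := by
    intro x h1 h2 h3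
    funext j
    rcases lt_trichotomy (j:ℕ) n with h|h|h
    · have hj : j = emb2 n ⟨(j:ℕ), h⟩ := Fin.ext rfl
      rw [hj, h1]
    · have hj : j = jj1 n := Fin.ext h
      rw [hj, h2]
    · have hj : j = jj2 n := Fin.ext (show (j:ℕ) = n+1 by have := j.isLt; omega)
      rw [hj, h3]
  -- special values at T and F
  have htuT : dotp u T = 0 := by
    rw [htu]
    simp [hT_def, chi]
  have htuF : dotp u F = 0 := by
    rw [htu]
    simp [hF_def, chi]
  have hAcast : (∑ i : Fin n, (a i : ℝ)) = (A : ℝ) := by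
    rw [hA]; push_cast; rfl
  have hsT : dotp a' T = 0 := by
    rw [dotp_split]
    have h1 : (∑ i : Fin n, a' (emb2 n i) * chi (T (emb2 n i)))
        = ∑ i : Fin n, (a i : ℝ) := by
      refine Finset.sum_congr rfl fun i _ => ?_
      rw [ha'emb]; simp [hT_def, chi]
    rw [h1, ha'j1, ha'j2, hAcast]
    simp [hT_def, chi]
    ring
  have hsF : dotp a' F = 0 := by
    rw [dotp_split]
    have h1 : (∑ i : Fin n, a' (emb2 n i) * chi (F (emb2 n i)))
        = ∑ i : Fin n, -(a i : ℝ) := by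
      refine Finset.sum_congr rfl fun i _ => ?_
      rw [ha'emb]; simp [hF_def, chi]
    rw [h1, Finset.sum_neg_distrib, hAcast, ha'j1, ha'j2]
    simp [hF_def, chi]
    ring
  -- the pointwise identity
  have hval : ∀ x, |dotp d x| + |dotp e x| - |dotp c x| =
      if dotp a' x = 0 ∧ x ≠ T ∧ x ≠ F then 2*y else 0 := by
    intro x
    rw [hdd x, hee x, hcc x]
    by_cases hs : dotp a' x = 0
    · rw [hs]
      by_cases hxT : x = T
      · subst hxT
        rw [htuT]
        simp
      · by_cases hxF : x = F
        · subst hxF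
          rw [htuF]
          simp [hxT]
        · rw [if_pos ⟨rfl, hxT, hxF⟩]
          have hm0 : m x = 0 := by
            have h := hint x
            rw [hs] at h
            exact_mod_cast h.symm
          have hne : x (jj1 n) ≠ x (jj2 n) := by
            intro hEq
            cases hb1 : x (jj1 n)
            · have hb2 : x (jj2 n) = false := by rw [← hEq, hb1]
              have hz : (∑ i : Fin n, a i * (if x (emb2 n i) then 1 else -1)) = -A := by
                rw [hm_def] at hm0
                simp only [hb1, hb2, Bool.false_eq_true, Bool.true_eq_false,
                  if_false, if_true, ite_false, ite_true] at hm0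
                omega
              exact hxF (hextF x (hforce' x hz) hb1 hb2)
            · have hb2 : x (jj2 n) = true := by rw [← hEq, hb1]
              have hz : (∑ i : Fin n, a i * (if x (emb2 n i) then 1 else -1)) = A := by
                rw [hm_def] at hm0
                simp only [hb1, hb2, Bool.false_eq_true, Bool.true_eq_false,
                  if_false, if_true, ite_false, ite_true] at hm0
                omega
              exact hxT (hextT x (hforce x hz) hb1 hb2)
          have ht1 : |dotp u x| = 1 := by
            rw [htu x]
            cases hb1 : x (jj1 n) <;> cases hb2 : x (jj2 n)
            · exact absurd (hb1.trans hb2.symm) hne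
            · cases hb0 : x i0 <;>
                simp only [chi, hb0, hb1, hb2, if_true, if_false] <;> norm_num
            · cases hb0 : x i0 <;>
                simp only [chi, hb0, hb1, hb2, if_true, if_false] <;> norm_num
            · exact absurd (hb1.trans hb2.symm) hne
          rw [zero_add, zero_sub, abs_neg, mul_zero, abs_zero, sub_zero, abs_mul,
            abs_of_pos hy0, ht1, mul_one]
          ring
    · rw [if_neg (fun h => hs h.1)]
      have h1 : 1 ≤ |dotp a' x| := habs1 x hs
      have h2 : |y * dotp u x| ≤ |dotp a' x| := by
        rw [abs_mul, abs_of_pos hy0]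
        have h3 := ht2 x
        have h4 : |dotp u x| ≥ 0 := abs_nonneg _
        nlinarith
      have h5 := abs_identity (dotp a' x) (y * dotp u x) h2
      rw [h5, abs_mul, abs_two]
      ring
  -- sum manipulation
  have hstep1 : (∑ x : Fin (n+2) → Bool, mu p x * |dotp d x|)
      + (∑ x : Fin (n+2) → Bool, mu p x * |dotp e x|)
      - (∑ x : Fin (n+2) → Bool, mu p x * |dotp c x|)
      = 2*y * ∑ x : Fin (n+2) → Bool,
          (if dotp a' x = 0 ∧ x ≠ T ∧ x ≠ F then mu p x else 0) := by
    rw [← Finset.sum_add_distrib, ← Finset.sum_sub_distrib, Finset.mul_sum]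
    refine Finset.sum_congr rfl fun x _ => ?_
    have hv := hval x
    by_cases hx : dotp a' x = 0 ∧ x ≠ T ∧ x ≠ F
    · rw [if_pos hx] at hv
      rw [if_pos hx]
      linear_combination (mu p x) * hv
    · rw [if_neg hx] at hv
      rw [if_neg hx]
      linear_combination (mu p x) * hv
  -- values of mu at T and F
  have hwtT : wt T = (n:ℤ) + 2 := by
    simp [wt, hT_def]
  have hwtF : wt F = 0 := by
    simp [wt, hF_def]
  have hmuT : mu p T = p ((n:ℤ)+1) / lam (n+2) p := by
    simp only [mu, mu', hwtT]
    rw [hp_out ((n:ℤ)+2) (Or.inr le_rfl), show (n:ℤ)+2-1 = (n:ℤ)+1 by ring]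
    norm_num
  have hmuF : mu p F = p 0 / lam (n+2) p := by
    simp only [mu, mu', hwtF]
    rw [hp_out ((0:ℤ)-1) (Or.inl (by norm_num))]
    norm_num
  have hTneF : T ≠ F := by
    intro h
    have := congrFun h i0
    simp [hT_def, hF_def] at this
  have hstep2 : (∑ x : Fin (n+2) → Bool, if dotp a' x = 0 then mu p x else 0)
      = (∑ x : Fin (n+2) → Bool, if dotp a' x = 0 ∧ x ≠ T ∧ x ≠ F then mu p x else 0)
        + mu p T + mu p F := by
    have hptw : ∀ x : Fin (n+2) → Bool, (if dotp a' x = 0 then mu p x else 0)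
        = (if dotp a' x = 0 ∧ x ≠ T ∧ x ≠ F then mu p x else 0)
          + (if x = T then mu p T else 0) + (if x = F then mu p F else 0) := by
      intro x
      by_cases hxT : x = T
      · subst hxT
        rw [if_pos hsT, if_neg (fun h => h.2.1 rfl), if_pos rfl, if_neg hTneF]
        ring
      · by_cases hxF : x = F
        · subst hxF
          rw [if_pos hsF, if_neg (fun h => h.2.2 rfl), if_neg hxT, if_pos rfl]
          ring
        · by_cases hs : dotp a' x = 0
          · rw [if_pos hs, if_pos ⟨hs, hxT, hxF⟩, if_neg hxT, if_neg hxF]; ring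
          · rw [if_neg hs, if_neg (fun h => hs h.1), if_neg hxT, if_neg hxF]; ring
    rw [Finset.sum_congr rfl fun x _ => hptw x, Finset.sum_add_distrib, Finset.sum_add_distrib,
      Finset.sum_ite_eq' Finset.univ T (fun _ => mu p T),
      Finset.sum_ite_eq' Finset.univ F (fun _ => mu p F)]
    simp
  -- conclusion
  have h2y : (2*y) ≠ 0 := by positivity
  rw [hstep1, hstep2, hmuT, hmuF, mul_div_cancel_left₀ _ h2y]
  ring
end
end

section
/- Let n ≥ 1, let p = (p_0,…,p_{n-1}) be a probability vector, let f : {-1,1}^n → {-1,1} be any Boolean function, and let a ∈ ℝ^n satisfy Σ_{i=1}^n a_i = 0. Then Σ_{i=1}^n a_i · \tilde f^p(i) = (1/2) · Σ_{x ∈ {-1,1}^n} μ'_p(x) · f(x) · (a·x); that is, when the entries of a sum to zero, the constant term C_f^p = Σ_x f(x)(p_{wt(x)-1} − p_{wt(x)}) contributes nothing to the linear functional a applied to the semivalue vector of f. -/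
open Finset

noncomputable section

theorem stmt7 (n : ℕ) (hn : 1 ≤ n) (p : ℤ → ℝ)
    (hp_nonneg : ∀ t : ℤ, 0 ≤ p t)
    (hp_out : ∀ t : ℤ, (t < 0 ∨ (n : ℤ) ≤ t) → p t = 0)
    (hp_sum : ∑ t ∈ Finset.range n, ((n - 1).choose t : ℝ) * p (t : ℤ) = 1)
    (f : (Fin n → Bool) → ℝ) (hf : ∀ x, f x = 1 ∨ f x = -1)
    (a : Fin n → ℝ) (ha : ∑ i, a i = 0) :
    ∑ i, a i * semivalue p f i
      = (1 / 2) * ∑ x : Fin n → Bool, mu' p x * f x * dotp a x := by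
  have key : ∀ x : Fin n → Bool,
      ∑ i, a i * ((if x i then p (wt x - 1) else p (wt x)) * f x * chi (x i))
        = (1/2) * (mu' p x * f x * dotp a x) := by
    intro x
    have h : ∀ i, a i * ((if x i then p (wt x - 1) else p (wt x)) * f x * chi (x i))
        = (1/2) * (mu' p x * f x * (a i * chi (x i)))
          + ((p (wt x - 1) - p (wt x))/2 * f x) * a i := by
      intro i
      unfold mu' chi
      by_cases hb : x i <;> simp [hb] <;> try ring
    simp_rw [h, Finset.sum_add_distrib, ← Finset.mul_sum, ha, mul_zero, add_zero]
    rw [dotp]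
  simp_rw [semivalue, Finset.mul_sum]
  rw [Finset.sum_comm]
  simp_rw [key]
end
end

section
/- Let n ≥ 1, let p = (p_0,…,p_{n-1}) be a probability vector, and let a ∈ ℝ^n satisfy Σ_{i=1}^n a_i = 0. Then for every Boolean function f : {-1,1}^n → {-1,1}, Σ_{i=1}^n a_i · \tilde f^p(i) ≤ (1/2) · Σ_{x ∈ {-1,1}^n} μ'_p(x) · |a·x|, and equality holds for the linear threshold function f(x) = sign(a·x). Consequently, the maximum of Σ_{i=1}^n a_i · \tilde f^p(i) over all Boolean functions f : {-1,1}^n → {-1,1} equals (Λ(p)/2) · E_{x ∼ μ_p}[|a·x|]. -/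
open Finset

noncomputable section

lemma key_s8 {n : ℕ} (p : ℤ → ℝ) (a : Fin n → ℝ) (ha : ∑ i, a i = 0)
    (f : (Fin n → Bool) → ℝ) :
    ∑ i, a i * semivalue p f i
      = (1/2) * ∑ x : Fin n → Bool, mu' p x * (f x * dotp a x) := by
  simp only [semivalue, Finset.mul_sum]
  rw [Finset.sum_comm]
  refine Finset.sum_congr rfl fun x _ => ?_
  have h1 : ∀ i : Fin n, a i * ((if x i then p (wt x - 1) else p (wt x)) * f x * chi (x i))
      = f x * ((1/2) * mu' p x * (a i * chi (x i)) + (p (wt x - 1) - p (wt x))/2 * a i) := by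
    intro i
    by_cases h : x i <;> simp [chi, h, mu'] <;> ring
  simp only [h1]
  rw [← Finset.mul_sum, Finset.sum_add_distrib, ← Finset.mul_sum, ← Finset.mul_sum, ha, dotp]
  ring

lemma sgn_mul_self (z : ℝ) : sgn z * z = |z| := by
  unfold sgn
  rcases le_or_gt 0 z with h | h
  · simp [h, abs_of_nonneg h]
  · simp [not_le.2 h, abs_of_neg h]

theorem stmt8 (n : ℕ) (hn : 1 ≤ n) (p : ℤ → ℝ)
    (hp_nonneg : ∀ t : ℤ, 0 ≤ p t)
    (hp_out : ∀ t : ℤ, (t < 0 ∨ (n : ℤ) ≤ t) → p t = 0)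
    (hp_sum : ∑ t ∈ Finset.range n, ((n - 1).choose t : ℝ) * p (t : ℤ) = 1)
    (a : Fin n → ℝ) (ha : ∑ i, a i = 0) :
    (∀ f : (Fin n → Bool) → ℝ, (∀ x, f x = 1 ∨ f x = -1) →
        ∑ i, a i * semivalue p f i
          ≤ (1 / 2) * ∑ x : Fin n → Bool, mu' p x * |dotp a x|) ∧
    (∀ f : (Fin n → Bool) → ℝ, (∀ x, f x = sgn (dotp a x)) →
        ∑ i, a i * semivalue p f i
          = (1 / 2) * ∑ x : Fin n → Bool, mu' p x * |dotp a x|) ∧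
    IsGreatest {v : ℝ | ∃ f : (Fin n → Bool) → ℝ,
        (∀ x, f x = 1 ∨ f x = -1) ∧ v = ∑ i, a i * semivalue p f i}
      (lam n p / 2 * ∑ x : Fin n → Bool, mu p x * |dotp a x|) := by
  have hmu'_nonneg : ∀ x : Fin n → Bool, 0 ≤ mu' p x := fun x =>
    add_nonneg (hp_nonneg _) (hp_nonneg _)
  -- Part 1
  have part1 : ∀ f : (Fin n → Bool) → ℝ, (∀ x, f x = 1 ∨ f x = -1) →
      ∑ i, a i * semivalue p f i
        ≤ (1 / 2) * ∑ x : Fin n → Bool, mu' p x * |dotp a x| := by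
    intro f hf
    rw [key_s8 p a ha f]
    apply mul_le_mul_of_nonneg_left _ (by norm_num : (0:ℝ) ≤ 1/2)
    apply Finset.sum_le_sum
    intro x _
    apply mul_le_mul_of_nonneg_left _ (hmu'_nonneg x)
    calc f x * dotp a x ≤ |f x * dotp a x| := le_abs_self _
      _ = |f x| * |dotp a x| := abs_mul _ _
      _ = |dotp a x| := by rcases hf x with h | h <;> simp [h]
  have part2 : ∀ f : (Fin n → Bool) → ℝ, (∀ x, f x = sgn (dotp a x)) →
      ∑ i, a i * semivalue p f i
        = (1 / 2) * ∑ x : Fin n → Bool, mu' p x * |dotp a x| := by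
    intro f hf
    rw [key_s8 p a ha f]
    congr 1
    refine Finset.sum_congr rfl fun x _ => ?_
    rw [hf x, sgn_mul_self]
  refine ⟨part1, part2, ?_⟩
  -- lam > 0
  have hlam_pos : 0 < lam n p := by
    obtain ⟨t, ht, htne⟩ := Finset.exists_ne_zero_of_sum_ne_zero
      (by rw [hp_sum]; norm_num :
        ∑ t ∈ Finset.range n, ((n - 1).choose t : ℝ) * p (t : ℤ) ≠ 0)
    have htn : t < n := Finset.mem_range.1 ht
    have hpt : 0 < p (t : ℤ) := lt_of_le_of_ne (hp_nonneg _) (by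
      intro h; exact htne (by rw [← h]; ring))
    set x0 : Fin n → Bool := fun i => decide ((i : ℕ) < t) with hx0
    have hwt : wt x0 = (t : ℤ) := by
      have : (Finset.univ.filter fun i : Fin n => x0 i = true)
          = Finset.Iio (⟨t, htn⟩ : Fin n) := by
        ext i
        simp [hx0, Fin.lt_def]
      rw [wt, this]
      simp
    have hx0pos : 0 < mu' p x0 := by
      rw [mu', hwt]
      exact lt_of_lt_of_le hpt (le_add_of_nonneg_right (hp_nonneg _))
    calc (0:ℝ) < mu' p x0 := hx0pos
      _ ≤ lam n p := Finset.single_le_sum (fun x _ => hmu'_nonneg x) (Finset.mem_univ x0)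
  have hlam_ne : lam n p ≠ 0 := ne_of_gt hlam_pos
  have hval : lam n p / 2 * ∑ x : Fin n → Bool, mu p x * |dotp a x|
      = (1 / 2) * ∑ x : Fin n → Bool, mu' p x * |dotp a x| := by
    rw [Finset.mul_sum, Finset.mul_sum]
    refine Finset.sum_congr rfl fun x _ => ?_
    rw [mu]
    field_simp
  rw [hval]
  constructor
  · exact ⟨fun x => sgn (dotp a x), fun x => by
      by_cases h : 0 ≤ dotp a x <;> simp [sgn, h], (part2 _ fun x => rfl).symm⟩
  · rintro v ⟨f, hf, rfl⟩
    exact part1 f hf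
end
end

section
/- Let n ≥ 1, let p = (p_0,…,p_{n-1}) be a probability vector, let w, v ∈ ℝ^n with Σ_{i=1}^n w_i = Σ_{i=1}^n v_i, let θ ∈ ℝ, and set f(x) = sign(w·x − θ), g(x) = sign(v·x − θ). If \tilde f^p(i) = \tilde g^p(i) for all i ∈ {1,…,n}, then Σ_{x ∈ {-1,1}^n} μ'_p(x) · |f(x) − g(x)| · ( |w·x − θ| + |v·x − θ| ) = 0. -/
open Finset

noncomputable section

lemma sgn_key (a b : ℝ) :
    (sgn a - sgn b) * (a - b) = |sgn a - sgn b| * (|a| + |b|) := by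
  unfold sgn
  by_cases h1 : 0 ≤ a <;> by_cases h2 : 0 ≤ b
  · simp [h1, h2]
  · rw [if_pos h1, if_neg h2, abs_of_nonneg h1, abs_of_neg (lt_of_not_ge h2)]
    norm_num
    ring
  · rw [if_neg h1, if_pos h2, abs_of_neg (lt_of_not_ge h1), abs_of_nonneg h2]
    norm_num
    ring
  · simp [h1, h2]

theorem stmt14 (n : ℕ) (hn : 1 ≤ n) (p : ℤ → ℝ)
    (hp_nonneg : ∀ t : ℤ, 0 ≤ p t)
    (hp_out : ∀ t : ℤ, (t < 0 ∨ (n : ℤ) ≤ t) → p t = 0)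
    (hp_sum : ∑ t ∈ Finset.range n, ((n - 1).choose t : ℝ) * p (t : ℤ) = 1)
    (w v : Fin n → ℝ) (hwv : ∑ i, w i = ∑ i, v i) (θ : ℝ)
    (f g : (Fin n → Bool) → ℝ)
    (hf : ∀ x, f x = sgn (dotp w x - θ))
    (hg : ∀ x, g x = sgn (dotp v x - θ))
    (hsv : ∀ i : Fin n, semivalue p f i = semivalue p g i) :
    ∑ x : Fin n → Bool,
        mu' p x * |f x - g x| * (|dotp w x - θ| + |dotp v x - θ|) = 0 := by
  -- Pointwise identity replacing absolute values
  have key : ∀ x : Fin n → Bool,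
      mu' p x * |f x - g x| * (|dotp w x - θ| + |dotp v x - θ|)
        = ∑ i, (w i - v i) * (mu' p x * (f x - g x) * chi (x i)) := by
    intro x
    have hdiff : (f x - g x) * ((dotp w x - θ) - (dotp v x - θ))
        = |f x - g x| * (|dotp w x - θ| + |dotp v x - θ|) := by
      rw [hf, hg]
      exact sgn_key _ _
    have hdot : dotp w x - dotp v x = ∑ i, (w i - v i) * chi (x i) := by
      simp [dotp, sub_mul, Finset.sum_sub_distrib]
    calc mu' p x * |f x - g x| * (|dotp w x - θ| + |dotp v x - θ|)
        = mu' p x * ((f x - g x) * ((dotp w x - θ) - (dotp v x - θ))) := by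
          rw [hdiff]; ring
      _ = ∑ i, (w i - v i) * (mu' p x * (f x - g x) * chi (x i)) := by
          rw [show (dotp w x - θ) - (dotp v x - θ) = dotp w x - dotp v x from by ring,
            hdot]
          simp only [Finset.mul_sum]
          apply Finset.sum_congr rfl; intro i _; ring
  simp only [key]
  rw [Finset.sum_comm]
  -- For each function h, the weighted correlation decomposes via the semivalue
  have decomp : ∀ (h : (Fin n → Bool) → ℝ) (i : Fin n),
      ∑ x : Fin n → Bool, mu' p x * h x * chi (x i)
        = 2 * semivalue p h i + ∑ x : Fin n → Bool, (p (wt x) - p (wt x - 1)) * h x := by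
    intro h i
    unfold semivalue
    rw [Finset.mul_sum, ← Finset.sum_add_distrib]
    apply Finset.sum_congr rfl
    intro x _
    unfold mu' chi
    by_cases hx : x i <;> simp [hx] <;> ring
  have const : ∀ i : Fin n,
      ∑ x : Fin n → Bool, mu' p x * (f x - g x) * chi (x i)
        = ∑ x : Fin n → Bool, (p (wt x) - p (wt x - 1)) * (f x - g x) := by
    intro i
    have : ∑ x : Fin n → Bool, mu' p x * (f x - g x) * chi (x i)
        = (∑ x : Fin n → Bool, mu' p x * f x * chi (x i))
          - ∑ x : Fin n → Bool, mu' p x * g x * chi (x i) := by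
      rw [← Finset.sum_sub_distrib]; apply Finset.sum_congr rfl; intro x _; ring
    have h2 : ∑ x : Fin n → Bool, (p (wt x) - p (wt x - 1)) * (f x - g x)
        = (∑ x : Fin n → Bool, (p (wt x) - p (wt x - 1)) * f x)
          - ∑ x : Fin n → Bool, (p (wt x) - p (wt x - 1)) * g x := by
      rw [← Finset.sum_sub_distrib]
      apply Finset.sum_congr rfl; intro x _; ring
    rw [this, decomp f i, decomp g i, hsv i, h2]
    ring
  calc ∑ i, ∑ x : Fin n → Bool, (w i - v i) * (mu' p x * (f x - g x) * chi (x i))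
      = ∑ i, (w i - v i) * ∑ x : Fin n → Bool, mu' p x * (f x - g x) * chi (x i) := by
        apply Finset.sum_congr rfl; intro i _; rw [Finset.mul_sum]
    _ = (∑ i, (w i - v i)) * ∑ x : Fin n → Bool, (p (wt x) - p (wt x - 1)) * (f x - g x) := by
        rw [Finset.sum_mul]; apply Finset.sum_congr rfl; intro i _; rw [const i]
    _ = 0 := by
        rw [Finset.sum_sub_distrib, hwv, sub_self, zero_mul]
end
end

section
/- (Uniqueness of weighted voting games from semivalues.) Let n ≥ 1, let p = (p_0,…,p_{n-1}) be a probability vector, let w, v ∈ ℝ^n with Σ_{i=1}^n w_i = Σ_{i=1}^n v_i, let θ ∈ ℝ, and set f(x) = sign(w·x − θ), g(x) = sign(v·x − θ). If \tilde f^p(i) = \tilde g^p(i) for all i ∈ {1,…,n}, then f(x) = g(x) for every x ∈ {-1,1}^n such that p_{wt(x)} + p_{wt(x)−1} ≠ 0 and |w·x − θ| + |v·x − θ| ≠ 0. -/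
open Finset

noncomputable section

lemma dotp_sub {n : ℕ} (w v : Fin n → ℝ) (x : Fin n → Bool) :
    dotp (fun i => w i - v i) x = dotp w x - dotp v x := by
  simp [dotp, sub_mul, Finset.sum_sub_distrib]

theorem stmt15 (n : ℕ) (hn : 1 ≤ n) (p : ℤ → ℝ)
    (hp_nonneg : ∀ t : ℤ, 0 ≤ p t)
    (hp_out : ∀ t : ℤ, (t < 0 ∨ (n : ℤ) ≤ t) → p t = 0)
    (hp_sum : ∑ t ∈ Finset.range n, ((n - 1).choose t : ℝ) * p (t : ℤ) = 1)
    (w v : Fin n → ℝ) (hwv : ∑ i, w i = ∑ i, v i) (θ : ℝ)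
    (f g : (Fin n → Bool) → ℝ)
    (hf : ∀ x, f x = sgn (dotp w x - θ))
    (hg : ∀ x, g x = sgn (dotp v x - θ))
    (hsv : ∀ i : Fin n, semivalue p f i = semivalue p g i) :
    ∀ x : Fin n → Bool,
      p (wt x) + p (wt x - 1) ≠ 0 →
      |dotp w x - θ| + |dotp v x - θ| ≠ 0 →
      f x = g x := by
  set u : Fin n → ℝ := fun i => w i - v i with hu
  have hUsum : ∑ i, u i = 0 := by
    simp only [hu, Finset.sum_sub_distrib, hwv, sub_self]
  have inner : ∀ (y : Fin n → Bool),
      ∑ i, u i * ((if y i then p (wt y - 1) else p (wt y)) * chi (y i))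
        = mu' p y / 2 * dotp u y := by
    intro y
    have step : ∀ i, u i * ((if y i then p (wt y - 1) else p (wt y)) * chi (y i))
        = mu' p y / 2 * (u i * chi (y i)) + (p (wt y - 1) - p (wt y)) / 2 * u i := by
      intro i
      by_cases h : y i <;> simp [h, chi, mu'] <;> ring
    rw [Finset.sum_congr rfl (fun i _ => step i), Finset.sum_add_distrib,
      ← Finset.mul_sum, ← Finset.mul_sum, hUsum, mul_zero, add_zero, dotp]
  have identity : ∀ (h : (Fin n → Bool) → ℝ),
      ∑ i, u i * semivalue p h i
        = ∑ y : Fin n → Bool, h y * (mu' p y / 2 * dotp u y) := by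
    intro h
    simp only [semivalue, Finset.mul_sum]
    rw [Finset.sum_comm]
    refine Finset.sum_congr rfl fun y _ => ?_
    have : ∀ i, u i * ((if y i then p (wt y - 1) else p (wt y)) * h y * chi (y i))
        = h y * (u i * ((if y i then p (wt y - 1) else p (wt y)) * chi (y i))) := by
      intro i; ring
    rw [Finset.sum_congr rfl (fun i _ => this i), ← Finset.mul_sum, inner y]
  have hzero : ∑ y : Fin n → Bool, (f y - g y) * (mu' p y / 2 * dotp u y) = 0 := by
    have h1 := identity f
    have h2 := identity g
    have : ∑ y : Fin n → Bool, (f y - g y) * (mu' p y / 2 * dotp u y)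
        = ∑ i, u i * semivalue p f i - ∑ i, u i * semivalue p g i := by
      rw [h1, h2, ← Finset.sum_sub_distrib]
      refine Finset.sum_congr rfl fun y _ => ?_; ring
    rw [this]
    simp [hsv]
  have hnonneg : ∀ y : Fin n → Bool, 0 ≤ (f y - g y) * (mu' p y / 2 * dotp u y) := by
    intro y
    have hmu : 0 ≤ mu' p y := add_nonneg (hp_nonneg _) (hp_nonneg _)
    rw [hf y, hg y, hu, dotp_sub]
    by_cases h1 : 0 ≤ dotp w y - θ <;> by_cases h2 : 0 ≤ dotp v y - θ <;>
      simp only [sgn, h1, h2, if_true, if_false, sub_self, zero_mul, le_refl]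
    · have : 0 ≤ dotp w y - dotp v y := by linarith
      positivity
    · have hd : dotp w y - dotp v y ≤ 0 := by linarith
      nlinarith [mul_nonneg (div_nonneg hmu (by norm_num : (0:ℝ) ≤ 2)) (neg_nonneg.mpr hd)]
  intro x hμ _
  have hterm : (f x - g x) * (mu' p x / 2 * dotp u x) = 0 := by
    have := (Finset.sum_eq_zero_iff_of_nonneg (fun y _ => hnonneg y)).mp hzero x
      (Finset.mem_univ x)
    exact this
  have hmux : mu' p x ≠ 0 := hμ
  rw [hf x, hg x] at hterm ⊢
  rw [hu, dotp_sub] at hterm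
  by_cases h1 : 0 ≤ dotp w x - θ <;> by_cases h2 : 0 ≤ dotp v x - θ <;>
    simp only [sgn, h1, h2, if_true, if_false] at hterm ⊢
  · -- f = 1, g = -1 : contradiction
    exfalso
    have hd : 0 < dotp w x - dotp v x := by linarith
    have hmu : 0 < mu' p x :=
      lt_of_le_of_ne (add_nonneg (hp_nonneg _) (hp_nonneg _)) (Ne.symm hmux)
    nlinarith
  · -- f = -1, g = 1 : contradiction
    exfalso
    have hd : dotp w x - dotp v x < 0 := by linarith
    have hmu : 0 < mu' p x :=
      lt_of_le_of_ne (add_nonneg (hp_nonneg _) (hp_nonneg _)) (Ne.symm hmux)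
    nlinarith
end
end
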